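/- arXiv:2209.12631 — 8 statements merged into one kernel-verified Lean document; each statement's English description precedes it below -/
import Mathlib

section
/- For all integers t ≥ 2 and r_1 ≥ r_2 ≥ ... ≥ r_t ≥ 1 with r_1 ≥ 2, the complete multipartite graph K_{r_1,...,r_t} satisfies mob(K_{r_1,...,r_t}) = max{2, t−1}. -/
/-- `S` is a general position set of `G`: no three distinct vertices of `S`
lie on a common shortest path. -/
def IsGPSet {V : Type*} (G : SimpleGraph V) (S : Finset V) : Prop :=
  ∀ x ∈ S, ∀ y ∈ S, ∀ z ∈ S, x ≠ y → y ≠ z → x ≠ z →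
    G.dist x y + G.dist y z ≠ G.dist x z

/-- A legal move: one robot moves from an occupied vertex `u` to an adjacent
unoccupied vertex `v` so that the new set of occupied vertices is again in
general position. -/
def LegalMove {V : Type*} [DecidableEq V] (G : SimpleGraph V) (S T : Finset V) : Prop :=
  ∃ u ∈ S, ∃ v, v ∉ S ∧ G.Adj u v ∧ T = insert v (S.erase u) ∧ IsGPSet G T

/-- `S` is a mobile general position set of `G`: `S` is in general position and
there is a finite sequence of legal moves starting from `S` after which every
vertex of `G` has been occupied at some stage. -/
def IsMobileGPSet {V : Type*} [DecidableEq V] (G : SimpleGraph V) (S : Finset V) : Prop :=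
  IsGPSet G S ∧ ∃ (m : ℕ) (f : ℕ → Finset V), f 0 = S ∧
    (∀ i < m, LegalMove G (f i) (f (i + 1))) ∧
    ∀ v : V, ∃ i ≤ m, v ∈ f i

/-- The mobile general position number of `G`. -/
noncomputable def mob {V : Type*} [DecidableEq V] (G : SimpleGraph V) : ℕ :=
  sSup {n | ∃ S : Finset V, IsMobileGPSet G S ∧ S.card = n}

/-- The general position number of `G`. -/
noncomputable def gpNum {V : Type*} (G : SimpleGraph V) : ℕ :=
  sSup {n | ∃ S : Finset V, IsGPSet G S ∧ S.card = n}

section MSeqPart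

variable {V : Type*} [DecidableEq V] {G : SimpleGraph V}

/-- A legal-move sequence from `S` to `T` during which every vertex of `A` is occupied
at some stage. -/
def MSeq (G : SimpleGraph V) (S T : Finset V) (A : Set V) : Prop :=
  ∃ m : ℕ, ∃ f : ℕ → Finset V, f 0 = S ∧ f m = T ∧
    (∀ i < m, LegalMove G (f i) (f (i + 1))) ∧ ∀ v ∈ A, ∃ i ≤ m, v ∈ f i

theorem MSeq.refl (S : Finset V) : MSeq G S S ↑S :=
  ⟨0, fun _ => S, rfl, rfl, by omega, fun v hv => ⟨0, le_refl 0, hv⟩⟩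

theorem MSeq.mono {S T : Finset V} {A B : Set V} (h : MSeq G S T A) (hBA : B ⊆ A) :
    MSeq G S T B := by
  obtain ⟨m, f, h0, hm, hl, hc⟩ := h
  exact ⟨m, f, h0, hm, hl, fun v hv => hc v (hBA hv)⟩

theorem MSeq.trans {S T U : Finset V} {A B : Set V} (h1 : MSeq G S T A) (h2 : MSeq G T U B) :
    MSeq G S U (A ∪ B) := by
  obtain ⟨m, f, h0, hm, hl, hc⟩ := h1
  obtain ⟨m', f', h0', hm', hl', hc'⟩ := h2
  refine ⟨m + m', fun i => if i ≤ m then f i else f' (i - m), by simp [h0], ?_, ?_, ?_⟩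
  · dsimp only
    by_cases h : m' = 0
    · subst h
      simp only [Nat.add_zero, if_pos (le_refl m), hm]
      rw [← h0', ← hm']
    · rw [if_neg (by omega), show m + m' - m = m' by omega, hm']
  · intro i hi
    dsimp only
    rcases lt_trichotomy i m with hlt | heq | hgt
    · rw [if_pos (by omega), if_pos (by omega)]
      exact hl i hlt
    · subst heq
      have hm'pos : 0 < m' := by omega
      rw [if_pos (le_refl i), if_neg (by omega), show i + 1 - i = 1 by omega, hm, ← h0']
      exact hl' 0 hm'pos
    · rw [if_neg (by omega), if_neg (by omega), show i + 1 - m = (i - m) + 1 by omega]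
      exact hl' (i - m) (by omega)
  · intro v hv
    dsimp only
    rcases hv with hv | hv
    · obtain ⟨i, hi, hvi⟩ := hc v hv
      exact ⟨i, by omega, by simp only [if_pos hi]; exact hvi⟩
    · obtain ⟨i, hi, hvi⟩ := hc' v hv
      rcases Nat.eq_zero_or_pos i with rfl | hipos
      · refine ⟨m, by omega, ?_⟩
        simp only [if_pos (le_refl m), hm, ← h0']
        exact hvi
      · refine ⟨m + i, by omega, ?_⟩
        simp only [if_neg (show ¬ m + i ≤ m by omega), show m + i - m = i by omega]
        exact hvi

theorem MSeq.single {S T : Finset V} (h : LegalMove G S T) : MSeq G S T (↑S ∪ ↑T) := by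
  refine ⟨1, fun i => if i = 0 then S else T, by simp, by simp, ?_, ?_⟩
  · intro i hi
    have : i = 0 := by omega
    subst this
    simpa using h
  · intro v hv
    rcases hv with hv | hv
    · exact ⟨0, by omega, by simpa⟩
    · exact ⟨1, le_refl 1, by simpa⟩

theorem MSeq.visit {S : Finset V} {u v : V} (hu : u ∈ S) (hv : v ∉ S) (hadj : G.Adj u v)
    (hS : IsGPSet G S) (hT : IsGPSet G (insert v (S.erase u))) :
    MSeq G S S (↑S ∪ {v}) := by
  set T := insert v (S.erase u) with hTdef
  have m1 : LegalMove G S T := ⟨u, hu, v, hv, hadj, rfl, hT⟩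
  have hvT : v ∈ T := Finset.mem_insert_self _ _
  have huT : u ∉ T := by
    simp only [hTdef, Finset.mem_insert, Finset.mem_erase]
    push_neg
    exact ⟨hadj.ne, fun h => absurd rfl h.elim⟩
  have hvE : v ∉ S.erase u := fun hmem => hv (Finset.mem_of_mem_erase hmem)
  have m2 : LegalMove G T S := by
    refine ⟨v, hvT, u, huT, hadj.symm, ?_, hS⟩
    rw [hTdef, Finset.erase_insert hvE, Finset.insert_erase hu]
  refine ((MSeq.single m1).trans (MSeq.single m2)).mono ?_
  intro x hx
  rcases hx with hx | hx
  · exact Or.inl (Or.inl hx)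
  · exact Or.inl (Or.inr (by simp at hx; subst hx; exact hvT))

theorem MSeq.visitFinset {S : Finset V} {u : V} (hu : u ∈ S) (hS : IsGPSet G S)
    (W : Finset V)
    (h : ∀ w ∈ W, w ∉ S ∧ G.Adj u w ∧ IsGPSet G (insert w (S.erase u))) :
    MSeq G S S (↑S ∪ ↑W) := by
  induction W using Finset.induction_on with
  | empty => simpa using MSeq.refl S
  | @insert a W' ha ih =>
    obtain ⟨ha1, ha2, ha3⟩ := h a (Finset.mem_insert_self _ _)
    have h1 := MSeq.visit hu ha1 ha2 hS ha3
    have h2 := ih (fun w hw => h w (Finset.mem_insert_of_mem hw))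
    refine (h1.trans h2).mono ?_
    intro x hx
    rcases hx with hx | hx
    · exact Or.inl (Or.inl hx)
    · rcases Finset.mem_insert.mp hx with rfl | hx
      · exact Or.inl (Or.inr rfl)
      · exact Or.inr (Or.inr hx)

theorem MSeq.iterate {ι : Type*} {S : Finset V} (l : List ι) (F : ι → Set V)
    (h : ∀ p ∈ l, MSeq G S S (F p)) : MSeq G S S {v | ∃ p ∈ l, v ∈ F p} := by
  induction l with
  | nil => exact (MSeq.refl S).mono (by simp)
  | cons a l ih =>
    have h1 := h a (List.mem_cons_self)
    have h2 := ih (fun p hp => h p (List.mem_cons_of_mem a hp))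
    refine (h1.trans h2).mono ?_
    intro x hx
    simp only [Set.mem_setOf_eq, List.mem_cons] at hx
    obtain ⟨p, hp | hp, hxp⟩ := hx
    · subst hp; exact Or.inl hxp
    · exact Or.inr ⟨p, hp, hxp⟩

theorem MSeq.isMobile {S T : Finset V} {A : Set V} (h : MSeq G S T A) (hA : ∀ v, v ∈ A)
    (hS : IsGPSet G S) : IsMobileGPSet G S := by
  obtain ⟨m, f, h0, hm, hl, hc⟩ := h
  exact ⟨hS, m, f, h0, hl, fun v => hc v (hA v)⟩

theorem gp_of_card_le_two {S : Finset V} (h : S.card ≤ 2) : IsGPSet G S := by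
  intro x hx y hy z hz hxy hyz hxz
  exfalso
  have hsub : ({x, y, z} : Finset V) ⊆ S := by
    intro w hw
    simp only [Finset.mem_insert, Finset.mem_singleton] at hw
    rcases hw with rfl | rfl | rfl <;> assumption
  have hc : ({x, y, z} : Finset V).card = 3 := by
    rw [Finset.card_insert_of_notMem (by simp [hxy, hxz]),
      Finset.card_insert_of_notMem (by simp [hyz]), Finset.card_singleton]
  have := Finset.card_le_card hsub
  omega

end MSeqPart

section Multi

variable {t : ℕ} {r : Fin t → ℕ}

private abbrev KG (t : ℕ) (r : Fin t → ℕ) :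
    SimpleGraph ((i : Fin t) × Fin (r i)) :=
  SimpleGraph.completeMultipartiteGraph (fun i : Fin t => Fin (r i))

theorem KG_adj {x y : (i : Fin t) × Fin (r i)} : (KG t r).Adj x y ↔ x.1 ≠ y.1 :=
  Iff.rfl

theorem KG_dist_adj {x y : (i : Fin t) × Fin (r i)} (h : x.1 ≠ y.1) :
    (KG t r).dist x y = 1 :=
  SimpleGraph.dist_eq_one_iff_adj.mpr (KG_adj.mpr h)

theorem KG_dist_same (ht : 2 ≤ t) (hpos : ∀ i, 1 ≤ r i)
    {x y : (i : Fin t) × Fin (r i)} (hne : x ≠ y) (h : x.1 = y.1) :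
    (KG t r).dist x y = 2 := by
  have hj : ∃ j : Fin t, j ≠ x.1 := by
    by_cases h0 : x.1 = ⟨0, by omega⟩
    · exact ⟨⟨1, by omega⟩, by rw [h0]; simp [Fin.ext_iff]⟩
    · exact ⟨⟨0, by omega⟩, fun hc => h0 hc.symm⟩
  obtain ⟨j, hj⟩ := hj
  have a1 : (KG t r).Adj x ⟨j, ⟨0, hpos j⟩⟩ := KG_adj.mpr (fun hc => hj hc.symm)
  have a2 : (KG t r).Adj (⟨j, ⟨0, hpos j⟩⟩ : (i : Fin t) × Fin (r i)) y :=
    KG_adj.mpr (fun hc => hj (hc.trans h.symm))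
  have w : (KG t r).Walk x y := a1.toWalk.append a2.toWalk
  have hlen : (a1.toWalk.append a2.toWalk).length = 2 := by
    rw [SimpleGraph.Walk.length_append]; rfl
  have hle : (KG t r).dist x y ≤ 2 := by
    have := SimpleGraph.dist_le (a1.toWalk.append a2.toWalk)
    omega
  have h1 : (KG t r).dist x y ≠ 1 := by
    intro hc
    exact (KG_adj.mp (SimpleGraph.dist_eq_one_iff_adj.mp hc)) h
  have h0 : (KG t r).dist x y ≠ 0 := by
    intro hc
    rw [SimpleGraph.dist_eq_zero_iff_eq_or_not_reachable] at hc
    rcases hc with hc | hc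
    · exact hne hc
    · exact hc ⟨w⟩
  omega

theorem KG_not_gp (ht : 2 ≤ t) (hpos : ∀ i, 1 ≤ r i)
    {S : Finset ((i : Fin t) × Fin (r i))} {x z y : (i : Fin t) × Fin (r i)}
    (hx : x ∈ S) (hz : z ∈ S) (hy : y ∈ S) (hxz : x ≠ z) (hsame : x.1 = z.1)
    (hdiff : y.1 ≠ x.1) : ¬ IsGPSet (KG t r) S := by
  intro hgp
  have hxy : x ≠ y := fun h => hdiff (by rw [h])
  have hyz : y ≠ z := fun h => hdiff (by rw [h, ← hsame])
  have := hgp x hx y hy z hz hxy hyz hxz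
  rw [KG_dist_adj (Ne.symm hdiff), KG_dist_adj (fun h => hdiff (h.trans hsame.symm)),
    KG_dist_same ht hpos hxz hsame] at this
  exact this rfl

/-- A set with at most one vertex in each part. -/
def Rainbow (S : Finset ((i : Fin t) × Fin (r i))) : Prop :=
  ∀ x ∈ S, ∀ y ∈ S, x.1 = y.1 → x = y

theorem Rainbow.gp {S : Finset ((i : Fin t) × Fin (r i))} (h : Rainbow S) :
    IsGPSet (KG t r) S := by
  intro x hx y hy z hz hxy hyz hxz
  have d1 : x.1 ≠ y.1 := fun he => hxy (h x hx y hy he)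
  have d2 : y.1 ≠ z.1 := fun he => hyz (h y hy z hz he)
  have d3 : x.1 ≠ z.1 := fun he => hxz (h x hx z hz he)
  rw [KG_dist_adj d1, KG_dist_adj d2, KG_dist_adj d3]
  omega

theorem Rainbow.insert_erase {S : Finset ((i : Fin t) × Fin (r i))} (h : Rainbow S)
    {u w : (i : Fin t) × Fin (r i)} (hw : ∀ y ∈ S, y ≠ u → y.1 ≠ w.1) :
    Rainbow (insert w (S.erase u)) := by
  intro x hx y hy hxy
  rcases Finset.mem_insert.mp hx with hx1 | hx2
  · rcases Finset.mem_insert.mp hy with hy1 | hy2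
    · rw [hx1, hy1]
    · exact absurd (show y.1 = w.1 by rw [← hx1]; exact hxy.symm)
        (hw y (Finset.mem_of_mem_erase hy2) (Finset.ne_of_mem_erase hy2))
  · rcases Finset.mem_insert.mp hy with hy1 | hy2
    · exact absurd (show x.1 = w.1 by rw [← hy1]; exact hxy)
        (hw x (Finset.mem_of_mem_erase hx2) (Finset.ne_of_mem_erase hx2))
    · exact h x (Finset.mem_of_mem_erase hx2) y (Finset.mem_of_mem_erase hy2) hxy

end Multi

section UB

variable {t : ℕ} {r : Fin t → ℕ}

theorem mob_ub (ht : 2 ≤ t) (hpos : ∀ i, 1 ≤ r i) (h2 : 2 ≤ r ⟨0, Nat.lt_of_lt_of_le (by decide) ht⟩)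
    {S : Finset ((i : Fin t) × Fin (r i))} (hS : IsMobileGPSet (KG t r) S) :
    S.card ≤ max 2 (t - 1) := by
  by_contra hcon
  push_neg at hcon
  have hmax1 := le_max_left 2 (t - 1)
  have hmax2 := le_max_right 2 (t - 1)
  have h3 : 3 ≤ S.card := by omega
  have hT : t ≤ S.card := by omega
  obtain ⟨hgp, m, f, h0, hl, hcov⟩ := hS
  -- There is no legal move from S.
  have nomove : ∀ T, ¬ LegalMove (KG t r) S T := by
    rintro T ⟨u, hu, v, hv, hadj, rfl, hTgp⟩
    have hadj' : u.1 ≠ v.1 := KG_adj.mp hadj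
    by_cases hsp : ∃ x ∈ S, ∃ z ∈ S, x ≠ z ∧ x.1 = z.1
    · -- S is contained in a single part
      obtain ⟨x, hx, z, hz, hxz, hsame⟩ := hsp
      have hall : ∀ y ∈ S, y.1 = x.1 := by
        intro y hy
        by_contra hne
        exact KG_not_gp ht hpos hx hz hy hxz hsame hne hgp
      have hce : 1 < (S.erase u).card := by
        rw [Finset.card_erase_of_mem hu]; omega
      obtain ⟨a, ha, b, hb, hab⟩ := Finset.one_lt_card.mp hce
      refine KG_not_gp ht hpos (x := a) (z := b) (y := v)
        (Finset.mem_insert_of_mem ha) (Finset.mem_insert_of_mem hb)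
        (Finset.mem_insert_self _ _) hab ?_ ?_ hTgp
      · rw [hall a (Finset.mem_of_mem_erase ha), hall b (Finset.mem_of_mem_erase hb)]
      · rw [hall a (Finset.mem_of_mem_erase ha), ← hall u hu]
        exact fun hc => hadj' hc.symm
    · -- S is a rainbow set hitting every part
      push_neg at hsp
      have hinj : Set.InjOn Sigma.fst (↑S : Set ((i : Fin t) × Fin (r i))) := by
        intro x hx y hy he
        by_contra hne
        exact hsp x (Finset.mem_coe.mp hx) y (Finset.mem_coe.mp hy) hne he
      have hcard_im : (S.image Sigma.fst).card = S.card :=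
        Finset.card_image_of_injOn hinj
      have hle : S.card ≤ t := by
        have := Finset.card_le_univ (S.image Sigma.fst)
        rw [hcard_im] at this
        simpa using this
      have hteq : S.card = t := le_antisymm hle hT
      have ht3 : 3 ≤ t := by omega
      have himg : S.image Sigma.fst = Finset.univ :=
        Finset.eq_univ_of_card _ (by rw [hcard_im, hteq, Fintype.card_fin])
      have hocc : ∀ j : Fin t, ∃ w ∈ S, w.1 = j := by
        intro j
        have : j ∈ S.image Sigma.fst := himg ▸ Finset.mem_univ j
        obtain ⟨w, hw, hw1⟩ := Finset.mem_image.mp this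
        exact ⟨w, hw, hw1⟩
      obtain ⟨w, hwS, hw1⟩ := hocc v.1
      have hk : ∃ k : Fin t, k ≠ v.1 ∧ k ≠ u.1 := by
        have hne : (({v.1, u.1} : Finset (Fin t))ᶜ).Nonempty := by
          rw [← Finset.card_pos, Finset.card_compl]
          have hc2 : ({v.1, u.1} : Finset (Fin t)).card ≤ 2 := by
            refine le_trans (Finset.card_insert_le _ _) ?_
            rw [Finset.card_singleton]
          have := Fintype.card_fin t
          omega
        obtain ⟨k, hk⟩ := hne
        rw [Finset.mem_compl, Finset.mem_insert, Finset.mem_singleton] at hk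
        push_neg at hk
        exact ⟨k, hk.1, hk.2⟩
      obtain ⟨k, hkv, hku⟩ := hk
      obtain ⟨y, hyS, hy1⟩ := hocc k
      have hyu : y ≠ u := fun h => hku (by rw [← hy1, h])
      have hwu : w ≠ u := fun h => hadj' (by rw [← h, hw1])
      refine KG_not_gp ht hpos (x := w) (z := v) (y := y)
        (Finset.mem_insert_of_mem (Finset.mem_erase.mpr ⟨hwu, hwS⟩))
        (Finset.mem_insert_self _ _)
        (Finset.mem_insert_of_mem (Finset.mem_erase.mpr ⟨hyu, hyS⟩))
        (fun h => hv (h ▸ hwS)) hw1 ?_ hTgp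
      rw [hy1, hw1]
      exact hkv
  rcases Nat.eq_zero_or_pos m with rfl | hm
  · -- no moves at all: S must be the whole vertex set, contradicting GP
    have hall : ∀ v, v ∈ S := by
      intro v
      obtain ⟨i, hi, hvi⟩ := hcov v
      have : i = 0 := by omega
      subst this
      rwa [h0] at hvi
    have hi0 : (0 : ℕ) < t := by omega
    have hi1 : (1 : ℕ) < t := by omega
    refine KG_not_gp ht hpos
      (x := ⟨⟨0, hi0⟩, ⟨0, by omega⟩⟩) (z := ⟨⟨0, hi0⟩, ⟨1, by omega⟩⟩)
      (y := ⟨⟨1, hi1⟩, ⟨0, hpos _⟩⟩)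
      (hall _) (hall _) (hall _) ?_ rfl ?_ hgp
    · intro hc
      have := congrArg (fun p => p.2.1) hc
      simp at this
    · simp [Fin.ext_iff]
  · exact nomove (f 1) (by have := hl 0 hm; rwa [h0] at this)

end UB

section Constructions

theorem exists_mobile_two {t : ℕ} {r : Fin t → ℕ} (ht : t = 2) (hpos : ∀ i, 1 ≤ r i) :
    ∃ S : Finset ((i : Fin t) × Fin (r i)), IsMobileGPSet (KG t r) S ∧ S.card = 2 := by
  subst ht
  set a0 : (i : Fin 2) × Fin (r i) := ⟨0, ⟨0, hpos 0⟩⟩ with ha0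
  set b0 : (i : Fin 2) × Fin (r i) := ⟨1, ⟨0, hpos 1⟩⟩ with hb0
  have ha0f : a0.1 = 0 := by rw [ha0]
  have hb0f : b0.1 = 1 := by rw [hb0]
  have hab : a0 ≠ b0 := by
    intro h
    have hc : (0 : Fin 2) = 1 := by rw [← ha0f, h, hb0f]
    exact absurd hc (by decide)
  set S : Finset ((i : Fin 2) × Fin (r i)) := {a0, b0} with hSdef
  have haS : a0 ∈ S := by simp [hSdef]
  have hbS : b0 ∈ S := by simp [hSdef]
  have hcard : S.card = 2 := by
    rw [hSdef, Finset.card_insert_of_notMem (by simpa using hab), Finset.card_singleton]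
  have hgpS : IsGPSet (KG 2 r) S := gp_of_card_le_two (by omega)
  have hsmall : ∀ u ∈ S, ∀ w : (i : Fin 2) × Fin (r i),
      IsGPSet (KG 2 r) (insert w (S.erase u)) := by
    intro u hu w
    apply gp_of_card_le_two
    have h1 := Finset.card_insert_le w (S.erase u)
    have h2 := Finset.card_erase_of_mem hu
    omega
  -- cover part 1 (except b0) using robot a0
  have seq1 : MSeq (KG 2 r) S S (↑S ∪ ↑(Finset.univ.filter
      (fun w : (i : Fin 2) × Fin (r i) => w.1 = 1 ∧ w ≠ b0))) := by
    refine MSeq.visitFinset haS hgpS _ ?_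
    intro w hw
    rw [Finset.mem_filter] at hw
    obtain ⟨-, hw1, hwb⟩ := hw
    refine ⟨?_, ?_, hsmall _ haS _⟩
    · intro hwS
      rcases Finset.mem_insert.mp hwS with h | h
      · rw [h, ha0f] at hw1
        exact absurd hw1 (by decide)
      · exact hwb (Finset.mem_singleton.mp h)
    · refine KG_adj.mpr ?_
      rw [ha0f, hw1]
      decide
  -- cover part 0 (except a0) using robot b0
  have seq2 : MSeq (KG 2 r) S S (↑S ∪ ↑(Finset.univ.filter
      (fun w : (i : Fin 2) × Fin (r i) => w.1 = 0 ∧ w ≠ a0))) := by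
    refine MSeq.visitFinset hbS hgpS _ ?_
    intro w hw
    rw [Finset.mem_filter] at hw
    obtain ⟨-, hw1, hwa⟩ := hw
    refine ⟨?_, ?_, hsmall _ hbS _⟩
    · intro hwS
      rcases Finset.mem_insert.mp hwS with h | h
      · exact hwa h
      · rw [Finset.mem_singleton.mp h, hb0f] at hw1
        exact absurd hw1 (by decide)
    · refine KG_adj.mpr ?_
      rw [hb0f, hw1]
      decide
  refine ⟨S, (seq1.trans seq2).isMobile ?_ hgpS, hcard⟩
  intro v
  by_cases hv1 : v.1 = 1
  · by_cases hvb : v = b0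
    · exact Or.inl (Or.inl (Finset.mem_coe.mpr (by rw [hvb]; exact hbS)))
    · exact Or.inl (Or.inr (Finset.mem_coe.mpr
        (Finset.mem_filter.mpr ⟨Finset.mem_univ _, hv1, hvb⟩)))
  · have hv0 : v.1 = 0 := by
      have hlt := v.1.isLt
      rw [Fin.ext_iff] at hv1 ⊢
      simp only [Fin.val_one, Fin.val_zero] at hv1 ⊢
      omega
    by_cases hva : v = a0
    · exact Or.inr (Or.inl (Finset.mem_coe.mpr (by rw [hva]; exact haS)))
    · exact Or.inr (Or.inr (Finset.mem_coe.mpr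
        (Finset.mem_filter.mpr ⟨Finset.mem_univ _, hv0, hva⟩)))

theorem exists_mobile_big {t : ℕ} {r : Fin t → ℕ} (ht : 3 ≤ t) (hpos : ∀ i, 1 ≤ r i) :
    ∃ S : Finset ((i : Fin t) × Fin (r i)), IsMobileGPSet (KG t r) S ∧ S.card = t - 1 := by
  set L : Fin t := ⟨t - 1, by omega⟩ with hL
  set v0 : Fin t → (i : Fin t) × Fin (r i) := fun i => ⟨i, ⟨0, hpos i⟩⟩ with hv0
  have v0inj : Function.Injective v0 := fun i j h => congrArg Sigma.fst h
  have v0fst : ∀ i, (v0 i).1 = i := fun i => rfl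
  set S : Finset ((i : Fin t) × Fin (r i)) := (Finset.univ.erase L).image v0 with hS
  have hmem : ∀ x ∈ S, x.1 ≠ L ∧ x = v0 x.1 := by
    intro x hx
    obtain ⟨i, hi, hxi⟩ := Finset.mem_image.mp hx
    subst hxi
    exact ⟨Finset.ne_of_mem_erase hi, rfl⟩
  have hmem' : ∀ i : Fin t, i ≠ L → v0 i ∈ S := fun i hi =>
    Finset.mem_image_of_mem _ (Finset.mem_erase.mpr ⟨hi, Finset.mem_univ i⟩)
  have hrS : Rainbow S := by
    intro x hx y hy hxy
    rw [(hmem x hx).2, (hmem y hy).2, hxy]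
  have hcard : S.card = t - 1 := by
    rw [hS, Finset.card_image_of_injective _ v0inj,
      Finset.card_erase_of_mem (Finset.mem_univ L), Finset.card_univ, Fintype.card_fin]
  have hi0 : (⟨0, by omega⟩ : Fin t) ≠ L := by
    intro hc
    have h0 := congrArg Fin.val hc
    simp only [hL] at h0
    omega
  have key : ∀ p : Fin t, MSeq (KG t r) S S {w : (i : Fin t) × Fin (r i) | w.1 = p} := by
    intro p
    by_cases hp : p = L
    · subst hp
      refine ((MSeq.visitFinset (hmem' _ hi0) hrS.gp
          (Finset.univ.filter (fun w : (i : Fin t) × Fin (r i) => w.1 = L)) ?_).mono ?_)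
      · intro w hw
        rw [Finset.mem_filter] at hw
        refine ⟨fun hwS => (hmem w hwS).1 hw.2, KG_adj.mpr ?_,
          (hrS.insert_erase ?_).gp⟩
        · rw [v0fst, hw.2]
          exact hi0
        · intro y hy _
          rw [hw.2]
          exact (hmem y hy).1
      · intro x hx
        exact Or.inr (Finset.mem_coe.mpr (Finset.mem_filter.mpr ⟨Finset.mem_univ _, hx⟩))
    · have huS : v0 p ∈ S := hmem' p hp
      have hLS : v0 L ∉ S := fun h => (hmem _ h).1 rfl
      have hLp : (v0 L).1 ≠ (v0 p).1 := by
        rw [v0fst, v0fst]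
        exact fun h => hp h.symm
      set S' : Finset ((i : Fin t) × Fin (r i)) := insert (v0 L) (S.erase (v0 p)) with hS'
      have hrS' : Rainbow S' := hrS.insert_erase (fun y hy _ => by
        rw [v0fst]
        exact (hmem y hy).1)
      have m1 : LegalMove (KG t r) S S' :=
        ⟨v0 p, huS, v0 L, hLS, KG_adj.mpr (fun h => hLp h.symm), rfl, hrS'.gp⟩
      have hLS' : v0 L ∈ S' := Finset.mem_insert_self _ _
      have herase : S'.erase (v0 L) = S.erase (v0 p) :=
        Finset.erase_insert (fun h => hLS (Finset.mem_of_mem_erase h))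
      have m3 : LegalMove (KG t r) S' S := by
        refine ⟨v0 L, hLS', v0 p, ?_, KG_adj.mpr hLp, ?_, hrS.gp⟩
        · intro hc
          rcases Finset.mem_insert.mp hc with h | h
          · exact hp (v0inj h)
          · exact Finset.notMem_erase _ _ h
        · rw [herase, Finset.insert_erase huS]
      have m2 : MSeq (KG t r) S' S' (↑S' ∪ ↑(Finset.univ.filter
          (fun w : (i : Fin t) × Fin (r i) => w.1 = p))) := by
        refine MSeq.visitFinset hLS' hrS'.gp _ ?_
        intro w hw
        rw [Finset.mem_filter] at hw
        have hwp := hw.2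
        refine ⟨?_, KG_adj.mpr (by rw [v0fst, hwp]; exact fun h => hp h.symm), ?_⟩
        · intro hwS'
          rcases Finset.mem_insert.mp hwS' with h | h
          · apply hp
            rw [← hwp, h, v0fst]
          · have h2 := (hmem w (Finset.mem_of_mem_erase h)).2
            rw [hwp] at h2
            rw [h2] at h
            exact Finset.notMem_erase _ _ h
        · rw [herase]
          refine (hrS.insert_erase ?_).gp
          intro y hy hyne hc
          exact hyne ((hmem y hy).2.trans (congrArg v0 (hc.trans hwp)))
      refine (((MSeq.single m1).trans m2).trans (MSeq.single m3)).mono ?_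
      intro x hx
      exact Or.inl (Or.inr (Or.inr
        (Finset.mem_coe.mpr (Finset.mem_filter.mpr ⟨Finset.mem_univ _, hx⟩))))
  have all := MSeq.iterate (List.finRange t)
    (fun p => {w : (i : Fin t) × Fin (r i) | w.1 = p}) (fun p _ => key p)
  refine ⟨S, all.isMobile ?_ hrS.gp, hcard⟩
  intro v
  exact ⟨v.1, List.mem_finRange v.1, rfl⟩

end Constructions

/-- For `t ≥ 2` and `r 0 ≥ r 1 ≥ ⋯ ≥ r (t-1) ≥ 1` with `r 0 ≥ 2`, the complete
multipartite graph `K_{r_1,…,r_t}` satisfies `mob = max {2, t - 1}`. -/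
theorem stmt1 (t : ℕ) (ht : 2 ≤ t) (r : Fin t → ℕ)
    (hanti : ∀ i j : Fin t, i ≤ j → r j ≤ r i)
    (hpos : ∀ i, 1 ≤ r i) (h2 : 2 ≤ r ⟨0, by omega⟩) :
    mob (SimpleGraph.completeMultipartiteGraph (fun i : Fin t => Fin (r i))) =
      max 2 (t - 1) := by
  obtain ⟨S, hS, hcard⟩ : ∃ S : Finset ((i : Fin t) × Fin (r i)),
      IsMobileGPSet (KG t r) S ∧ S.card = max 2 (t - 1) := by
    rcases eq_or_lt_of_le ht with he | h3
    · obtain ⟨S, h1, hc⟩ := exists_mobile_two he.symm hpos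
      refine ⟨S, h1, ?_⟩
      rw [hc, ← he]
      decide
    · obtain ⟨S, h1, hc⟩ := exists_mobile_big h3 hpos
      refine ⟨S, h1, ?_⟩
      rw [hc, Nat.max_eq_right (by omega)]
  rw [mob]
  apply le_antisymm
  · refine csSup_le ⟨S.card, S, hS, rfl⟩ ?_
    rintro n ⟨T, hT, rfl⟩
    exact mob_ub ht hpos h2 hT
  · refine le_csSup ⟨max 2 (t - 1), ?_⟩ ⟨S, hS, hcard⟩
    rintro n ⟨T, hT, rfl⟩
    exact mob_ub ht hpos h2 hT
end

section
/- For all integers a, b with 2 ≤ a ≤ b, there exists a connected simple graph G with mob(G) = a and gp(G) = b. -/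
/-! ### The complete split graph -/

/-- The complete split graph: a clique on `Fin a` joined to an independent set `Fin b`. -/
def splitG (a b : ℕ) : SimpleGraph (Fin a ⊕ Fin b) where
  Adj x y := x ≠ y ∧ (x.isLeft ∨ y.isLeft)
  symm := ⟨fun _ _ ⟨h1, h2⟩ => ⟨h1.symm, h2.symm⟩⟩
  loopless := ⟨fun _ h => h.1 rfl⟩

lemma splitG_adj {a b : ℕ} (x y : Fin a ⊕ Fin b) :
    (splitG a b).Adj x y ↔ x ≠ y ∧ (x.isLeft ∨ y.isLeft) := Iff.rfl

lemma splitG_connected {a b : ℕ} (ha : 1 ≤ a) : (splitG a b).Connected := by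
  have key : ∀ x : Fin a ⊕ Fin b, (splitG a b).Reachable (Sum.inl ⟨0, ha⟩) x := by
    intro x
    by_cases h : Sum.inl ⟨0, ha⟩ = x
    · exact h ▸ SimpleGraph.Reachable.refl _
    · exact SimpleGraph.Adj.reachable ⟨h, Or.inl rfl⟩
  rw [SimpleGraph.connected_iff]
  exact ⟨fun x y => (key x).symm.trans (key y), ⟨Sum.inl ⟨0, ha⟩⟩⟩

lemma dist_inl {a b : ℕ} (i : Fin a) (x : Fin a ⊕ Fin b) (h : Sum.inl i ≠ x) :
    (splitG a b).dist (Sum.inl i) x = 1 :=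
  SimpleGraph.dist_eq_one_iff_adj.mpr ⟨h, Or.inl rfl⟩

lemma dist_inr_inr {a b : ℕ} (ha : 1 ≤ a) (j k : Fin b) (h : j ≠ k) :
    (splitG a b).dist (Sum.inr j) (Sum.inr k) = 2 := by
  have hne : (Sum.inr j : Fin a ⊕ Fin b) ≠ Sum.inr k := fun hh => h (Sum.inr.inj hh)
  have adj1 : (splitG a b).Adj (Sum.inr j) (Sum.inl ⟨0, ha⟩) := ⟨by simp, Or.inr rfl⟩
  have adj2 : (splitG a b).Adj (Sum.inl ⟨0, ha⟩) (Sum.inr k) := ⟨by simp, Or.inl rfl⟩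
  have hub := SimpleGraph.dist_le
    (SimpleGraph.Walk.cons adj1 (SimpleGraph.Walk.cons adj2 SimpleGraph.Walk.nil))
  simp only [SimpleGraph.Walk.length_cons, SimpleGraph.Walk.length_nil] at hub
  have h0 : (splitG a b).dist (Sum.inr j) (Sum.inr k) ≠ 0 := by
    intro h'
    exact hne (((splitG_connected ha (b := b))).dist_eq_zero_iff.mp h')
  have h1 : (splitG a b).dist (Sum.inr j) (Sum.inr k) ≠ 1 := by
    intro h'
    have := (SimpleGraph.dist_eq_one_iff_adj.mp h').2
    simp at this
  omega

/-- Characterisation of general position sets in the complete split graph. -/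
lemma gp_char {a b : ℕ} (ha : 1 ≤ a) (S : Finset (Fin a ⊕ Fin b)) :
    IsGPSet (splitG a b) S ↔
      ¬ ∃ (i : Fin a) (j k : Fin b), j ≠ k ∧ Sum.inl i ∈ S ∧ Sum.inr j ∈ S ∧ Sum.inr k ∈ S := by
  constructor
  · rintro hgp ⟨i, j, k, hjk, hi, hj, hk⟩
    have h1 : (splitG a b).dist (Sum.inr j) (Sum.inl i) = 1 := by
      rw [SimpleGraph.dist_comm]; exact dist_inl i _ (by simp)
    have h2 : (splitG a b).dist (Sum.inl i) (Sum.inr k) = 1 := dist_inl i _ (by simp)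
    have h3 := dist_inr_inr ha j k hjk
    exact hgp _ hj _ hi _ hk (by simp) (by simp) (by simp [hjk]) (by omega)
  · intro hno x hx y hy z hz hxy hyz hxz heq
    have hc := splitG_connected (b := b) ha
    have d1 : 0 < (splitG a b).dist x y := hc.pos_dist_of_ne hxy
    have d2 : 0 < (splitG a b).dist y z := hc.pos_dist_of_ne hyz
    rcases x with xi | xj
    · have e1 : (splitG a b).dist (Sum.inl xi) y = 1 := dist_inl _ _ hxy
      have e2 : (splitG a b).dist (Sum.inl xi) z = 1 := dist_inl _ _ hxz
      omega
    · rcases z with zi | zk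
      · have e1 : (splitG a b).dist (Sum.inr xj) (Sum.inl zi) = 1 := by
          rw [SimpleGraph.dist_comm]; exact dist_inl _ _ (Ne.symm hxz)
        have e2 : (splitG a b).dist y (Sum.inl zi) = 1 := by
          rw [SimpleGraph.dist_comm]; exact dist_inl _ _ (Ne.symm hyz)
        omega
      · have hjk : xj ≠ zk := fun h => hxz (by rw [h])
        have e3 := dist_inr_inr ha xj zk hjk
        rcases y with yi | yj
        · exact hno ⟨yi, xj, zk, hjk, hy, hx, hz⟩
        · have hj2 : xj ≠ yj := fun h => hxy (by rw [h])
          have e1 := dist_inr_inr ha xj yj hj2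
          omega

/-- A GP set either avoids the clique entirely or contains at most one independent vertex. -/
lemma gp_cases {a b : ℕ} (ha : 1 ≤ a) {S : Finset (Fin a ⊕ Fin b)}
    (hS : IsGPSet (splitG a b) S) :
    (∀ i : Fin a, Sum.inl i ∉ S) ∨
      (∀ j k : Fin b, Sum.inr j ∈ S → Sum.inr k ∈ S → j = k) := by
  rw [gp_char ha] at hS
  by_contra h
  push_neg at h
  obtain ⟨⟨i, hi⟩, j, k, hj, hk, hjk⟩ := h
  exact hS ⟨i, j, k, hjk, hi, hj, hk⟩

lemma card_le_of_no_inl {a b : ℕ} {S : Finset (Fin a ⊕ Fin b)}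
    (h : ∀ i : Fin a, Sum.inl i ∉ S) : S.card ≤ b := by
  have hsub : S ⊆ Finset.univ.image (Sum.inr : Fin b → Fin a ⊕ Fin b) := by
    intro x hx
    rcases x with i | j
    · exact absurd hx (h i)
    · exact Finset.mem_image.mpr ⟨j, Finset.mem_univ j, rfl⟩
  calc S.card ≤ _ := Finset.card_le_card hsub
    _ ≤ (Finset.univ : Finset (Fin b)).card := Finset.card_image_le
    _ = b := by simp

lemma card_le_of_unique_inr {a b : ℕ} {S : Finset (Fin a ⊕ Fin b)}
    (h : ∀ j k : Fin b, Sum.inr j ∈ S → Sum.inr k ∈ S → j = k) : S.card ≤ a + 1 := by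
  by_cases hex : ∃ j : Fin b, Sum.inr j ∈ S
  · obtain ⟨j0, hj0⟩ := hex
    have hsub : S ⊆ insert (Sum.inr j0)
        (Finset.univ.image (Sum.inl : Fin a → Fin a ⊕ Fin b)) := by
      intro x hx
      rcases x with i | j
      · exact Finset.mem_insert_of_mem (Finset.mem_image.mpr ⟨i, Finset.mem_univ i, rfl⟩)
      · rw [h j j0 hx hj0]; exact Finset.mem_insert_self _ _
    calc S.card ≤ _ := Finset.card_le_card hsub
      _ ≤ _ + 1 := Finset.card_insert_le _ _
      _ ≤ a + 1 := by
          have := Finset.card_image_le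
            (f := (Sum.inl : Fin a → Fin a ⊕ Fin b)) (s := Finset.univ)
          simp at this; omega
  · push_neg at hex
    have hsub : S ⊆ Finset.univ.image (Sum.inl : Fin a → Fin a ⊕ Fin b) := by
      intro x hx
      rcases x with i | j
      · exact Finset.mem_image.mpr ⟨i, Finset.mem_univ i, rfl⟩
      · exact absurd hx (hex j)
    calc S.card ≤ _ := Finset.card_le_card hsub
      _ ≤ (Finset.univ : Finset (Fin a)).card := Finset.card_image_le
      _ ≤ a + 1 := by simp

/-- A set with no legal moves that misses some vertex is not mobile. -/
lemma frozen_not_mobile {V : Type*} [DecidableEq V] {G : SimpleGraph V} {S : Finset V}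
    (hfroz : ∀ T, ¬ LegalMove G S T) (hne : ∃ v : V, v ∉ S) : ¬ IsMobileGPSet G S := by
  rintro ⟨-, m, f, hf0, hmov, hcov⟩
  obtain ⟨v, hv⟩ := hne
  have hm : m = 0 := by
    by_contra h
    exact hfroz (f 1) (hf0 ▸ hmov 0 (Nat.pos_of_ne_zero h))
  obtain ⟨i, hi, hvi⟩ := hcov v
  have hi0 : i = 0 := by omega
  exact hv (by rw [← hf0, ← hi0]; exact hvi)

/-- A GP set avoiding the clique and of size at least 3 admits no legal move. -/
lemma frozen_B {a b : ℕ} (ha : 1 ≤ a) {S : Finset (Fin a ⊕ Fin b)}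
    (hno : ∀ i : Fin a, Sum.inl i ∉ S) (hcard : 3 ≤ S.card) :
    ∀ T, ¬ LegalMove (splitG a b) S T := by
  rintro T ⟨u, hu, v, hv, hadj, hTeq, hTgp⟩
  rcases u with ui | uj
  · exact hno ui hu
  rcases v with vi | vj
  swap
  · have := hadj.2; simp at this
  have hcard2 : 2 ≤ (S.erase (Sum.inr uj)).card := by
    rw [Finset.card_erase_of_mem hu]; omega
  obtain ⟨x, hx, y, hy, hxy⟩ := Finset.one_lt_card.mp hcard2
  rcases x with xi | xj
  · exact hno xi (Finset.mem_of_mem_erase hx)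
  rcases y with yi | yj
  · exact hno yi (Finset.mem_of_mem_erase hy)
  rw [gp_char ha] at hTgp
  refine hTgp ⟨vi, xj, yj, fun h => hxy (by rw [h]), ?_, ?_, ?_⟩
  · rw [hTeq]; exact Finset.mem_insert_self _ _
  · rw [hTeq]; exact Finset.mem_insert_of_mem hx
  · rw [hTeq]; exact Finset.mem_insert_of_mem hy

/-- The set consisting of the whole clique plus one independent vertex admits no legal move
(when the clique has at least 2 vertices). -/
lemma frozen_Aplus {a b : ℕ} (ha : 2 ≤ a) (j0 : Fin b)
    {S : Finset (Fin a ⊕ Fin b)}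
    (hSeq : S = insert (Sum.inr j0) (Finset.univ.image (Sum.inl : Fin a → Fin a ⊕ Fin b))) :
    ∀ T, ¬ LegalMove (splitG a b) S T := by
  have ha1 : 1 ≤ a := by omega
  rintro T ⟨u, hu, v, hv, hadj, hTeq, hTgp⟩
  rcases v with vi | vj
  · exact hv (by
      rw [hSeq]
      exact Finset.mem_insert_of_mem (Finset.mem_image.mpr ⟨vi, Finset.mem_univ vi, rfl⟩))
  have huL : u.isLeft := by
    rcases hadj.2 with h | h
    · exact h
    · simp at h
  rcases u with ui | uj
  swap
  · simp at huL
  have hvj0 : vj ≠ j0 := by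
    intro h
    exact hv (by rw [hSeq, h]; exact Finset.mem_insert_self _ _)
  -- pick a clique vertex different from ui
  have h2 : 1 < Fintype.card (Fin a) := by simp; omega
  obtain ⟨i', hi'⟩ := Fintype.exists_ne_of_one_lt_card h2 ui
  rw [gp_char ha1] at hTgp
  refine hTgp ⟨i', vj, j0, hvj0, ?_, ?_, ?_⟩
  · rw [hTeq]
    refine Finset.mem_insert_of_mem (Finset.mem_erase.mpr ⟨by simp [hi'], ?_⟩)
    rw [hSeq]
    exact Finset.mem_insert_of_mem (Finset.mem_image.mpr ⟨i', Finset.mem_univ i', rfl⟩)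
  · rw [hTeq]; exact Finset.mem_insert_self _ _
  · rw [hTeq]
    refine Finset.mem_insert_of_mem (Finset.mem_erase.mpr ⟨by simp, ?_⟩)
    rw [hSeq]; exact Finset.mem_insert_self _ _

/-- The move sequence: alternate between the full clique and the clique with the
robot on vertex 0 pushed out to successive independent vertices. -/
def seqF (a b : ℕ) (ha : 1 ≤ a) (hb : 1 ≤ b) : ℕ → Finset (Fin a ⊕ Fin b) := fun i =>
  if i % 2 = 0 then Finset.univ.image Sum.inl
  else insert (Sum.inr ⟨(i / 2) % b, Nat.mod_lt _ hb⟩)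
    ((Finset.univ.image Sum.inl).erase (Sum.inl ⟨0, ha⟩))

/-- The clique is a mobile general position set of the complete split graph. -/
lemma split_mobile_A {a b : ℕ} (ha : 1 ≤ a) (hb : 1 ≤ b) :
    IsMobileGPSet (splitG a b)
      (Finset.univ.image (Sum.inl : Fin a → Fin a ⊕ Fin b)) := by
  set A : Finset (Fin a ⊕ Fin b) := Finset.univ.image Sum.inl with hA
  set u0 : Fin a ⊕ Fin b := Sum.inl ⟨0, ha⟩ with hu0
  have hu0A : u0 ∈ A := Finset.mem_image.mpr ⟨⟨0, ha⟩, Finset.mem_univ _, rfl⟩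
  have hinrA : ∀ j : Fin b, Sum.inr j ∉ A := by simp [hA]
  have hAgp : IsGPSet (splitG a b) A := by
    rw [gp_char ha]
    rintro ⟨i, j, k, hjk, hi, hj, hk⟩
    exact hinrA j hj
  have hOddGP : ∀ j : Fin b, IsGPSet (splitG a b) (insert (Sum.inr j) (A.erase u0)) := by
    intro j
    rw [gp_char ha]
    rintro ⟨i, j1, k1, hjk, hi, hj, hk⟩
    have key : ∀ j' : Fin b, Sum.inr j' ∈ insert (Sum.inr j) (A.erase u0) → j' = j := by
      intro j' hj'
      rcases Finset.mem_insert.mp hj' with h | h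
      · exact Sum.inr.inj h
      · exact absurd (Finset.mem_of_mem_erase h) (hinrA j')
    exact hjk ((key j1 hj).trans (key k1 hk).symm)
  refine ⟨hAgp, 2 * b - 1, seqF a b ha hb, by simp [seqF, hA], ?_, ?_⟩
  · intro i hi
    rcases Nat.even_or_odd i with he | ho
    · have h1 : i % 2 = 0 := Nat.even_iff.mp he
      have h2 : (i + 1) % 2 = 1 := by omega
      have hFi : seqF a b ha hb i = A := by simp [seqF, h1, hA]
      set j : Fin b := ⟨((i + 1) / 2) % b, Nat.mod_lt _ hb⟩ with hj
      have hFi1 : seqF a b ha hb (i + 1) = insert (Sum.inr j) (A.erase u0) := by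
        simp [seqF, h2, hA, hu0, hj]
      refine ⟨u0, ?_, Sum.inr j, ?_, ?_, ?_, ?_⟩
      · rw [hFi]; exact hu0A
      · rw [hFi]; exact hinrA j
      · exact ⟨by simp [hu0], Or.inl rfl⟩
      · rw [hFi1, hFi]
      · rw [hFi1]; exact hOddGP j
    · have h1 : i % 2 = 1 := Nat.odd_iff.mp ho
      have h2 : (i + 1) % 2 = 0 := by omega
      set j : Fin b := ⟨(i / 2) % b, Nat.mod_lt _ hb⟩ with hj
      have hFi : seqF a b ha hb i = insert (Sum.inr j) (A.erase u0) := by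
        simp [seqF, h1, hA, hu0, hj]
      have hFi1 : seqF a b ha hb (i + 1) = A := by simp [seqF, h2, hA]
      have hjnot : Sum.inr j ∉ A.erase u0 := fun h => hinrA j (Finset.mem_of_mem_erase h)
      refine ⟨Sum.inr j, ?_, u0, ?_, ?_, ?_, ?_⟩
      · rw [hFi]; exact Finset.mem_insert_self _ _
      · rw [hFi]
        intro h
        rcases Finset.mem_insert.mp h with h | h
        · simp [hu0] at h
        · exact (Finset.mem_erase.mp h).1 rfl
      · exact ⟨by simp [hu0], Or.inr rfl⟩
      · rw [hFi1, hFi, Finset.erase_insert hjnot, Finset.insert_erase hu0A]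
      · rw [hFi1]; exact hAgp
  · intro x
    rcases x with i | k
    · exact ⟨0, by omega, by
        simp only [seqF, Nat.zero_mod, if_pos rfl]
        exact Finset.mem_image.mpr ⟨i, Finset.mem_univ i, rfl⟩⟩
    · refine ⟨2 * k.val + 1, by have := k.isLt; omega, ?_⟩
      have h1 : (2 * k.val + 1) % 2 = 1 := by omega
      have hFk : seqF a b ha hb (2 * k.val + 1) =
          insert (Sum.inr ⟨((2 * k.val + 1) / 2) % b, Nat.mod_lt _ hb⟩) (A.erase u0) := by
        simp [seqF, h1, hA, hu0]
      have hfin : (⟨((2 * k.val + 1) / 2) % b, Nat.mod_lt _ hb⟩ : Fin b) = k := by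
        apply Fin.ext
        show ((2 * k.val + 1) / 2) % b = k.val
        have h2 : (2 * k.val + 1) / 2 = k.val := by omega
        rw [h2, Nat.mod_eq_of_lt k.isLt]
      rw [hFk, hfin]
      exact Finset.mem_insert_self _ _

/-- Any mobile GP set in the split graph (with `2 ≤ a < b`) has at most `a` vertices. -/
lemma split_mob_le {a b : ℕ} (ha : 2 ≤ a) (hab : a + 1 ≤ b) {S : Finset (Fin a ⊕ Fin b)}
    (hmob : IsMobileGPSet (splitG a b) S) : S.card ≤ a := by
  have ha1 : 1 ≤ a := by omega
  by_contra hgt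
  push_neg at hgt
  have hgp := hmob.1
  rcases gp_cases ha1 hgp with hno | huniq
  · have h3 : 3 ≤ S.card := by omega
    exact frozen_not_mobile (frozen_B ha1 hno h3) ⟨Sum.inl ⟨0, ha1⟩, hno _⟩ hmob
  · have hle := card_le_of_unique_inr huniq
    have hcard : S.card = a + 1 := by omega
    have hex : ∃ j : Fin b, Sum.inr j ∈ S := by
      by_contra hnex
      push_neg at hnex
      have hsub : S ⊆ Finset.univ.image (Sum.inl : Fin a → Fin a ⊕ Fin b) := by
        intro x hx
        rcases x with i | j
        · exact Finset.mem_image.mpr ⟨i, Finset.mem_univ i, rfl⟩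
        · exact absurd hx (hnex j)
      have h1 : S.card ≤ a := by
        calc S.card ≤ _ := Finset.card_le_card hsub
          _ ≤ (Finset.univ : Finset (Fin a)).card := Finset.card_image_le
          _ = a := by simp
      omega
    obtain ⟨j0, hj0⟩ := hex
    have hSeq : S = insert (Sum.inr j0)
        (Finset.univ.image (Sum.inl : Fin a → Fin a ⊕ Fin b)) := by
      have hsub : S ⊆ insert (Sum.inr j0)
          (Finset.univ.image (Sum.inl : Fin a → Fin a ⊕ Fin b)) := by
        intro x hx
        rcases x with i | j
        · exact Finset.mem_insert_of_mem (Finset.mem_image.mpr ⟨i, Finset.mem_univ i, rfl⟩)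
        · rw [huniq j j0 hx hj0]; exact Finset.mem_insert_self _ _
      refine Finset.eq_of_subset_of_card_le hsub ?_
      rw [Finset.card_insert_of_notMem (by simp),
        Finset.card_image_of_injective _ Sum.inl_injective]
      simp [hcard]
    have h2b : 1 < Fintype.card (Fin b) := by simp; omega
    obtain ⟨j1, hj1⟩ := Fintype.exists_ne_of_one_lt_card h2b j0
    have hnot : Sum.inr j1 ∉ S := fun h => hj1 (huniq j1 j0 h hj0)
    exact frozen_not_mobile (frozen_Aplus ha j0 hSeq) ⟨Sum.inr j1, hnot⟩ hmob

/-- For all integers `2 ≤ a ≤ b` there is a connected simple graph `G` with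
`mob(G) = a` and `gp(G) = b`. -/
theorem stmt2 (a b : ℕ) (ha : 2 ≤ a) (hab : a ≤ b) :
    ∃ (V : Type) (_ : Fintype V) (instDec : DecidableEq V) (G : SimpleGraph V),
      G.Connected ∧ @mob V instDec G = a ∧ gpNum G = b := by
  have ha1 : 1 ≤ a := by omega
  rcases eq_or_lt_of_le hab with rfl | hlt
  · -- case a = b : use the complete graph, i.e. `splitG a 0`
    refine ⟨Fin a ⊕ Fin 0, inferInstance, inferInstance, splitG a 0,
      splitG_connected ha1, ?_, ?_⟩
    · -- mob = a
      have hcard : (Finset.univ : Finset (Fin a ⊕ Fin 0)).card = a := by simp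
      have hgpuniv : IsGPSet (splitG a 0) Finset.univ := by
        rw [gp_char ha1]
        rintro ⟨i, j, k, -⟩
        exact j.elim0
      refine IsGreatest.csSup_eq ⟨⟨Finset.univ, ⟨hgpuniv, 0, fun _ => Finset.univ, rfl,
        fun i hi => absurd hi (by omega), fun v => ⟨0, le_refl 0, Finset.mem_univ v⟩⟩,
        hcard⟩, ?_⟩
      rintro n ⟨S, -, rfl⟩
      calc S.card ≤ _ := Finset.card_le_univ S
        _ = a := hcard
    · -- gpNum = a
      have hcard : (Finset.univ : Finset (Fin a ⊕ Fin 0)).card = a := by simp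
      have hgpuniv : IsGPSet (splitG a 0) Finset.univ := by
        rw [gp_char ha1]
        rintro ⟨i, j, k, -⟩
        exact j.elim0
      refine IsGreatest.csSup_eq ⟨⟨Finset.univ, hgpuniv, hcard⟩, ?_⟩
      rintro n ⟨S, -, rfl⟩
      calc S.card ≤ _ := Finset.card_le_univ S
        _ = a := hcard
  · -- case a < b : use the complete split graph
    have hab1 : a + 1 ≤ b := hlt
    have hb1 : 1 ≤ b := by omega
    refine ⟨Fin a ⊕ Fin b, inferInstance, inferInstance, splitG a b,
      splitG_connected ha1, ?_, ?_⟩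
    · -- mob = a
      refine IsGreatest.csSup_eq ⟨⟨Finset.univ.image Sum.inl, split_mobile_A ha1 hb1, ?_⟩, ?_⟩
      · rw [Finset.card_image_of_injective _ Sum.inl_injective]; simp
      · rintro n ⟨S, hmob, rfl⟩
        exact split_mob_le ha hab1 hmob
    · -- gpNum = b
      have hBgp : IsGPSet (splitG a b)
          (Finset.univ.image (Sum.inr : Fin b → Fin a ⊕ Fin b)) := by
        rw [gp_char ha1]
        rintro ⟨i, j, k, hjk, hi, -⟩
        simp at hi
      refine IsGreatest.csSup_eq ⟨⟨Finset.univ.image Sum.inr, hBgp, ?_⟩, ?_⟩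
      · rw [Finset.card_image_of_injective _ Sum.inr_injective]; simp
      · rintro n ⟨S, hgp, rfl⟩
        rcases gp_cases ha1 hgp with hno | huniq
        · exact card_le_of_no_inl hno
        · calc S.card ≤ a + 1 := card_le_of_unique_inr huniq
            _ ≤ b := hab1
end

section
/- The cycle graphs C_4 and C_6 satisfy mob(C_4) = 2 and mob(C_6) = 2. -/
namespace MobAux

open SimpleGraph

/-- Computable cyclic distance on `Fin n`. -/
def cd (n : ℕ) (x y : Fin n) : ℕ := min (x - y).val (y - x).val

lemma cd_self (n : ℕ) (y : Fin n) : cd n y y = 0 := by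
  haveI : NeZero n := ⟨y.pos.ne'⟩
  simp [cd, sub_self]

lemma walk_lb {V : Type*} (G : SimpleGraph V) (g : V → ℤ)
    (hg : ∀ u v, G.Adj u v → (g u - g v).natAbs ≤ 1) :
    ∀ {x y : V} (p : G.Walk x y), (g x - g y).natAbs ≤ p.length := by
  intro x y p
  induction p with
  | nil => simp
  | @cons a b c h q ih =>
    have h1 := hg _ _ h
    have h2 : (g a - g c) = (g a - g b) + (g b - g c) := by ring
    have h3 := Int.natAbs_add_le (g a - g b) (g b - g c)
    rw [h2]
    simp only [Walk.length_cons]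
    omega

lemma cyc_dist (n : ℕ) (hconn : (cycleGraph n).Connected)
    (hlip : ∀ y u v : Fin n, (cycleGraph n).Adj u v →
      ((cd n u y : ℤ) - (cd n v y : ℤ)).natAbs ≤ 1)
    (hzero : ∀ x y : Fin n, cd n x y = 0 → x = y)
    (hstep : ∀ x y : Fin n, cd n x y ≠ 0 →
      ∃ w, (cycleGraph n).Adj x w ∧ cd n w y + 1 = cd n x y) :
    ∀ x y : Fin n, (cycleGraph n).dist x y = cd n x y := by
  have hub : ∀ (k : ℕ) (x y : Fin n), cd n x y = k → (cycleGraph n).dist x y ≤ k := by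
    intro k
    induction k with
    | zero =>
      intro x y h
      rw [hzero x y h]
      simp
    | succ k ih =>
      intro x y h
      obtain ⟨w, hadj, hw⟩ := hstep x y (by omega)
      have h1 : (cycleGraph n).dist x w = 1 := SimpleGraph.dist_eq_one_iff_adj.mpr hadj
      have h2 : (cycleGraph n).dist w y ≤ k := ih w y (by omega)
      have h3 := hconn.dist_triangle (u := x) (v := w) (w := y)
      omega
  intro x y
  refine le_antisymm (hub _ x y rfl) ?_
  obtain ⟨p, hp⟩ := hconn.exists_walk_length_eq_dist x y
  have := walk_lb (cycleGraph n) (fun v => (cd n v y : ℤ)) (fun u v h => hlip y u v h) p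
  rw [hp] at this
  simpa [cd_self] using this

lemma conn4 : (cycleGraph 4).Connected := cycleGraph_connected (n := 3)
lemma conn6 : (cycleGraph 6).Connected := cycleGraph_connected (n := 5)

lemma dist4 : ∀ x y : Fin 4, (cycleGraph 4).dist x y = cd 4 x y :=
  cyc_dist 4 conn4 (by decide) (by decide) (by decide)

lemma dist6 : ∀ x y : Fin 6, (cycleGraph 6).dist x y = cd 6 x y :=
  cyc_dist 6 conn6 (by decide) (by decide) (by decide)

/-- Computable version of `IsGPSet` for cycles. -/
def gpC (n : ℕ) (S : Finset (Fin n)) : Prop :=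
  ∀ x ∈ S, ∀ y ∈ S, ∀ z ∈ S, x ≠ y → y ≠ z → x ≠ z →
    cd n x y + cd n y z ≠ cd n x z

instance (n : ℕ) (S : Finset (Fin n)) : Decidable (gpC n S) := by
  unfold gpC; infer_instance

lemma gp_iff4 (S : Finset (Fin 4)) : IsGPSet (cycleGraph 4) S ↔ gpC 4 S := by
  unfold IsGPSet gpC
  simp only [dist4]

lemma gp_iff6 (S : Finset (Fin 6)) : IsGPSet (cycleGraph 6) S ↔ gpC 6 S := by
  unfold IsGPSet gpC
  simp only [dist6]

lemma isGPSet_of_card_le_two {V : Type*} [DecidableEq V] (G : SimpleGraph V)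
    (S : Finset V) (h : S.card ≤ 2) : IsGPSet G S := by
  intro x hx y hy z hz hxy hyz hxz
  have hsub : ({x, y, z} : Finset V) ⊆ S := by
    intro a ha
    simp only [Finset.mem_insert, Finset.mem_singleton] at ha
    rcases ha with rfl | rfl | rfl <;> assumption
  have hcard := Finset.card_le_card hsub
  rw [Finset.card_insert_of_notMem (by simp [hxy, hxz]),
    Finset.card_insert_of_notMem (by simp [hyz]), Finset.card_singleton] at hcard
  omega

lemma legal_of_card {V : Type*} [DecidableEq V] (G : SimpleGraph V) {S T : Finset V}
    (u v : V) (hu : u ∈ S) (hv : v ∉ S) (hadj : G.Adj u v)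
    (hT : T = insert v (S.erase u)) (hcard : T.card ≤ 2) : LegalMove G S T :=
  ⟨u, hu, v, hv, hadj, hT, isGPSet_of_card_le_two G T hcard⟩

lemma hA : ∀ S : Finset (Fin 4), gpC 4 S → S.card ≤ 2 := by decide

lemma hB : ∀ S : Finset (Fin 6), gpC 6 S → 2 < S.card →
    ((∀ u ∈ S, ∀ v, v ∉ S → (cycleGraph 6).Adj u v →
      ¬ gpC 6 (insert v (S.erase u))) ∧ S ≠ Finset.univ) := by decide

lemma card_le_two_of_mobile6 (S : Finset (Fin 6))
    (hS : IsMobileGPSet (SimpleGraph.cycleGraph 6) S) : S.card ≤ 2 := by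
  by_contra hc
  push_neg at hc
  obtain ⟨hgp, m, f, hf0, hmove, hcover⟩ := hS
  have hgp' := (gp_iff6 S).mp hgp
  have hB' := hB S hgp' hc
  rcases Nat.eq_zero_or_pos m with hm | hm
  · -- no moves: coverage forces S = univ
    apply hB'.2
    apply Finset.eq_univ_iff_forall.mpr
    intro v
    obtain ⟨i, hi, hvi⟩ := hcover v
    have : i = 0 := by omega
    rw [this, hf0] at hvi
    exact hvi
  · obtain ⟨u, hu, v, hv, hadj, hT, hTgp⟩ := hmove 0 hm
    rw [hf0] at hu hv hT
    exact hB'.1 u hu v hv hadj ((gp_iff6 _).mp (hT ▸ hTgp))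

lemma card_le_two_of_mobile4 (S : Finset (Fin 4))
    (hS : IsMobileGPSet (SimpleGraph.cycleGraph 4) S) : S.card ≤ 2 :=
  hA S ((gp_iff4 S).mp hS.1)

open Fin.NatCast in
lemma mobile4 : IsMobileGPSet (SimpleGraph.cycleGraph 4) ({0, 1} : Finset (Fin 4)) := by
  refine ⟨isGPSet_of_card_le_two _ _ (by decide), 2,
    fun i => {0, ((i : Fin 4) + 1)}, by norm_num, ?_, ?_⟩
  · intro i hi
    interval_cases i
    · exact legal_of_card _ ((0 : ℕ) + 1 : Fin 4) ((0 : ℕ) + 2 : Fin 4)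
        (by decide) (by decide) (by decide) (by decide) (by decide)
    · exact legal_of_card _ ((1 : ℕ) + 1 : Fin 4) ((1 : ℕ) + 2 : Fin 4)
        (by decide) (by decide) (by decide) (by decide) (by decide)
  · intro v
    fin_cases v
    · exact ⟨0, by omega, by decide⟩
    · exact ⟨0, by omega, by decide⟩
    · exact ⟨1, by omega, by decide⟩
    · exact ⟨2, by omega, by decide⟩

open Fin.NatCast in
lemma mobile6 : IsMobileGPSet (SimpleGraph.cycleGraph 6) ({0, 1} : Finset (Fin 6)) := by
  refine ⟨isGPSet_of_card_le_two _ _ (by decide), 4,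
    fun i => {0, ((i : Fin 6) + 1)}, by norm_num, ?_, ?_⟩
  · intro i hi
    interval_cases i
    · exact legal_of_card _ ((0 : ℕ) + 1 : Fin 6) ((0 : ℕ) + 2 : Fin 6)
        (by decide) (by decide) (by decide) (by decide) (by decide)
    · exact legal_of_card _ ((1 : ℕ) + 1 : Fin 6) ((1 : ℕ) + 2 : Fin 6)
        (by decide) (by decide) (by decide) (by decide) (by decide)
    · exact legal_of_card _ ((2 : ℕ) + 1 : Fin 6) ((2 : ℕ) + 2 : Fin 6)
        (by decide) (by decide) (by decide) (by decide) (by decide)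
    · exact legal_of_card _ ((3 : ℕ) + 1 : Fin 6) ((3 : ℕ) + 2 : Fin 6)
        (by decide) (by decide) (by decide) (by decide) (by decide)
  · intro v
    fin_cases v
    · exact ⟨0, by omega, by decide⟩
    · exact ⟨0, by omega, by decide⟩
    · exact ⟨1, by omega, by decide⟩
    · exact ⟨2, by omega, by decide⟩
    · exact ⟨3, by omega, by decide⟩
    · exact ⟨4, by omega, by decide⟩

lemma mob_eq_two {V : Type*} [DecidableEq V] (G : SimpleGraph V)
    (S₀ : Finset V) (h₀ : IsMobileGPSet G S₀) (hc₀ : S₀.card = 2)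
    (hub : ∀ S : Finset V, IsMobileGPSet G S → S.card ≤ 2) : mob G = 2 := by
  have h2 : 2 ∈ {n | ∃ S : Finset V, IsMobileGPSet G S ∧ S.card = n} := ⟨S₀, h₀, hc₀⟩
  have hb : ∀ n ∈ {n | ∃ S : Finset V, IsMobileGPSet G S ∧ S.card = n}, n ≤ 2 := by
    rintro n ⟨S, hS, rfl⟩
    exact hub S hS
  exact le_antisymm (csSup_le ⟨2, h2⟩ hb) (le_csSup ⟨2, hb⟩ h2)

end MobAux

/-- `mob(C₄) = 2` and `mob(C₆) = 2`. -/
theorem stmt3 :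
    mob (SimpleGraph.cycleGraph 4) = 2 ∧ mob (SimpleGraph.cycleGraph 6) = 2 := by
  constructor
  · exact MobAux.mob_eq_two _ _ MobAux.mobile4 (by decide) MobAux.card_le_two_of_mobile4
  · exact MobAux.mob_eq_two _ _ MobAux.mobile6 (by decide) MobAux.card_le_two_of_mobile6
end

section
/- For every integer n ≥ 3 with n ≠ 4 and n ≠ 6, the cycle graph C_n satisfies mob(C_n) = 3. -/
section MobCycleAux

open SimpleGraph Finset
open Fin.NatCast Fin.CommRing

variable {n : ℕ}

private lemma fin_sub_val' (a b : Fin n) : (a - b).val = (a.val + (n - b.val)) % n := by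
  rw [Fin.sub_def]
  show (n - b.val + a.val) % n = _
  rw [Nat.add_comm]

private lemma sub_val_cases (a b : Fin n) :
    (a - b).val + b.val = a.val ∨ (a - b).val + b.val = a.val + n := by
  have ha := a.isLt; have hb := b.isLt
  rcases le_or_gt b.val a.val with h | h
  · left
    rw [fin_sub_val']
    have e : a.val + (n - b.val) = n + (a.val - b.val) := by omega
    rw [e, Nat.add_mod_left, Nat.mod_eq_of_lt (by omega)]
    omega
  · right
    rw [fin_sub_val', Nat.mod_eq_of_lt (by omega)]
    omega

private lemma sub_val_of_le {a b : Fin n} (h : b.val ≤ a.val) :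
    (a - b).val = a.val - b.val := by
  have := sub_val_cases a b
  have := (a - b).isLt
  have := a.isLt
  omega

private lemma sub_val_of_lt {a b : Fin n} (h : a.val < b.val) :
    (a - b).val = a.val + n - b.val := by
  have := sub_val_cases a b
  have := (a - b).isLt
  have := b.isLt
  omega

private lemma walk_forward [NeZero n] (hn : 2 ≤ n) (u : Fin n) (k : ℕ) :
    ∃ w : (cycleGraph n).Walk u (u + (k : Fin n)), w.length = k := by
  induction k with
  | zero => exact ⟨SimpleGraph.Walk.nil.copy rfl (by simp), by simp⟩
  | succ k ih =>
    obtain ⟨w, hw⟩ := ih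
    have hadj : (cycleGraph n).Adj (u + (k : Fin n)) (u + (k : Fin n) + 1) := by
      rw [cycleGraph_adj']
      right
      rw [add_sub_cancel_left]
      simp [Fin.val_one', Nat.mod_eq_of_lt hn]
    refine ⟨(w.concat hadj).copy rfl (by push_cast; ring), by simp [hw]⟩

private lemma dist_lower (hn : 2 ≤ n) {u v : Fin n} (w : (cycleGraph n).Walk u v) :
    min (v - u).val (u - v).val ≤ w.length := by
  induction w with
  | nil =>
    rename_i u
    have := sub_val_cases u u
    have := (u - u).isLt
    simp only [SimpleGraph.Walk.length_nil]
    omega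
  | @cons u x v h p ih =>
    rw [cycleGraph_adj'] at h
    have h1 := sub_val_cases v u
    have h2 := sub_val_cases u v
    have h3 := sub_val_cases v x
    have h4 := sub_val_cases x v
    have h5 := sub_val_cases u x
    have h6 := sub_val_cases x u
    have := u.isLt; have := x.isLt; have := v.isLt
    have := (v-u).isLt; have := (u-v).isLt; have := (v-x).isLt
    have := (x-v).isLt; have := (u-x).isLt; have := (x-u).isLt
    rw [SimpleGraph.Walk.length_cons]
    omega

private lemma cycle_dist (hn : 2 ≤ n) (u v : Fin n) :
    (cycleGraph n).dist u v = min (v - u).val (u - v).val := by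
  haveI : NeZero n := ⟨by omega⟩
  apply le_antisymm
  · apply le_min
    · obtain ⟨w, hw⟩ := walk_forward hn u (v - u).val
      have he : u + (((v - u).val : ℕ) : Fin n) = v := by
        rw [Fin.cast_val_eq_self]; ring
      calc (cycleGraph n).dist u v ≤ (w.copy rfl he).length := SimpleGraph.dist_le _
        _ = (v - u).val := by simpa using hw
    · obtain ⟨w, hw⟩ := walk_forward hn v (u - v).val
      have he : v + (((u - v).val : ℕ) : Fin n) = u := by
        rw [Fin.cast_val_eq_self]; ring
      rw [SimpleGraph.dist_comm]
      calc (cycleGraph n).dist v u ≤ (w.copy rfl he).length := SimpleGraph.dist_le _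
        _ = (u - v).val := by simpa using hw
  · have hr : (cycleGraph n).Reachable u v := cycleGraph_preconnected u v
    obtain ⟨w, hw⟩ := hr.exists_walk_length_eq_dist
    rw [← hw]
    exact dist_lower hn w

private lemma gp_triple (hn : 2 ≤ n) (x y z : Fin n)
    (h1 : 0 < (y - x).val) (h2 : 0 < (z - y).val) (h3 : 0 < (x - z).val)
    (g1 : 2 * (y - x).val < n) (g2 : 2 * (z - y).val < n) (g3 : 2 * (x - z).val < n) :
    IsGPSet (cycleGraph n) {x, y, z} := by
  have c1 := sub_val_cases y x
  have c2 := sub_val_cases x y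
  have c3 := sub_val_cases z y
  have c4 := sub_val_cases y z
  have c5 := sub_val_cases x z
  have c6 := sub_val_cases z x
  have := x.isLt; have := y.isLt; have := z.isLt
  have := (y-x).isLt; have := (x-y).isLt; have := (z-y).isLt
  have := (y-z).isLt; have := (x-z).isLt; have := (z-x).isLt
  intro p hp q hq r hr hpq hqr hpr
  simp only [Finset.mem_insert, Finset.mem_singleton] at hp hq hr
  rcases hp with rfl | rfl | rfl <;> rcases hq with rfl | rfl | rfl <;>
    rcases hr with rfl | rfl | rfl <;>
    first
      | exact absurd rfl hpq
      | exact absurd rfl hqr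
      | exact absurd rfl hpr
      | (rw [cycle_dist hn, cycle_dist hn, cycle_dist hn]; omega)

private lemma dist_of_le (hn : 2 ≤ n) {a b : Fin n} (h : a.val < b.val) :
    (cycleGraph n).dist a b = min (b.val - a.val) (a.val + n - b.val) := by
  rw [cycle_dist hn, sub_val_of_le (le_of_lt h), sub_val_of_lt h]

private lemma gp_card_le (hn : 3 ≤ n) {S : Finset (Fin n)}
    (h : IsGPSet (cycleGraph n) S) : S.card ≤ 3 := by
  by_contra hc
  push_neg at hc
  obtain ⟨T, hTS, hT⟩ := Finset.exists_subset_card_eq hc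
  have h0 : T.Nonempty := by rw [← Finset.card_pos, hT]; omega
  set p0 := T.min' h0 with hp0
  have hp0T : p0 ∈ T := T.min'_mem h0
  set T1 := T.erase p0 with hT1
  have hT1c : T1.card = 3 := by rw [hT1, Finset.card_erase_of_mem hp0T, hT]
  have h1 : T1.Nonempty := by rw [← Finset.card_pos, hT1c]; omega
  set p1 := T1.min' h1 with hp1
  have hp1T1 : p1 ∈ T1 := T1.min'_mem h1
  set T2 := T1.erase p1 with hT2
  have hT2c : T2.card = 2 := by rw [hT2, Finset.card_erase_of_mem hp1T1, hT1c]
  have h2 : T2.Nonempty := by rw [← Finset.card_pos, hT2c]; omega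
  set p2 := T2.min' h2 with hp2
  have hp2T2 : p2 ∈ T2 := T2.min'_mem h2
  set T3 := T2.erase p2 with hT3
  have hT3c : T3.card = 1 := by rw [hT3, Finset.card_erase_of_mem hp2T2, hT2c]
  have h3 : T3.Nonempty := by rw [← Finset.card_pos, hT3c]; omega
  set p3 := T3.min' h3 with hp3
  have hp3T3 : p3 ∈ T3 := T3.min'_mem h3
  have hp3T2 : p3 ∈ T2 := Finset.mem_of_mem_erase hp3T3
  have hp3T1 : p3 ∈ T1 := Finset.mem_of_mem_erase hp3T2
  have hp2T1 : p2 ∈ T1 := Finset.mem_of_mem_erase hp2T2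
  have hp1T : p1 ∈ T := Finset.mem_of_mem_erase hp1T1
  have hp2T : p2 ∈ T := Finset.mem_of_mem_erase hp2T1
  have hp3T : p3 ∈ T := Finset.mem_of_mem_erase hp3T1
  have o01 : p0 < p1 :=
    lt_of_le_of_ne (T.min'_le _ hp1T) (Ne.symm (Finset.ne_of_mem_erase hp1T1))
  have o12 : p1 < p2 :=
    lt_of_le_of_ne (T1.min'_le _ hp2T1) (Ne.symm (Finset.ne_of_mem_erase hp2T2))
  have o23 : p2 < p3 :=
    lt_of_le_of_ne (T2.min'_le _ hp3T2) (Ne.symm (Finset.ne_of_mem_erase hp3T3))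
  have o01' : p0.val < p1.val := o01
  have o12' : p1.val < p2.val := o12
  have o23' : p2.val < p3.val := o23
  have hn2 : 2 ≤ n := by omega
  have m0 : p0 ∈ S := hTS hp0T
  have m1 : p1 ∈ S := hTS hp1T
  have m2 : p2 ∈ S := hTS hp2T
  have m3 : p3 ∈ S := hTS hp3T
  have ne01 : p0 ≠ p1 := ne_of_lt o01
  have ne12 : p1 ≠ p2 := ne_of_lt o12
  have ne23 : p2 ≠ p3 := ne_of_lt o23
  have ne02 : p0 ≠ p2 := ne_of_lt (o01.trans o12)
  have ne13 : p1 ≠ p3 := ne_of_lt (o12.trans o23)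
  have ne03 : p0 ≠ p3 := ne_of_lt (o01.trans (o12.trans o23))
  have A1 := h p0 m0 p1 m1 p2 m2 ne01 ne12 ne02
  have A3 := h p2 m2 p3 m3 p0 m0 ne23 ne03.symm ne02.symm
  rw [dist_of_le hn2 o01', dist_of_le hn2 o12',
      dist_of_le hn2 (o01'.trans o12')] at A1
  have d30 : (cycleGraph n).dist p2 p0
      = min (p2.val - p0.val) (p0.val + n - p2.val) := by
    rw [SimpleGraph.dist_comm]; exact dist_of_le hn2 (o01'.trans o12')
  have d31 : (cycleGraph n).dist p3 p0
      = min (p3.val - p0.val) (p0.val + n - p3.val) := by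
    rw [SimpleGraph.dist_comm]; exact dist_of_le hn2 (o01'.trans (o12'.trans o23'))
  rw [dist_of_le hn2 o23', d31, d30] at A3
  have := p3.isLt
  rcases (by omega : 2*(p2.val - p0.val) ≤ n ∨ 2*(p0.val + n - p2.val) ≤ n) with hw | hw
  · rw [Nat.min_eq_left (by omega), Nat.min_eq_left (by omega),
      Nat.min_eq_left (by omega)] at A1
    omega
  · rw [Nat.min_eq_left (by omega), Nat.min_eq_right (by omega),
      Nat.min_eq_right (by omega)] at A3
    omega

private lemma cast_diff [NeZero n] {s t : ℕ} (h : s ≤ t) :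
    (↑t : Fin n) - ↑s = ↑(t - s) := by
  have e : (↑s : Fin n) + ↑(t - s) = ↑t := by
    rw [← Nat.cast_add]; congr 1; omega
  rw [← e, add_sub_cancel_left]

private lemma cast_val [NeZero n] {k : ℕ} (h : k < n) : ((k : Fin n)).val = k := by
  rw [Fin.val_natCast]; exact Nat.mod_eq_of_lt h

private lemma diff_val [NeZero n] {s t : ℕ} (h1 : s ≤ t) (h2 : t - s < n) :
    ((↑t : Fin n) - ↑s).val = t - s := by rw [cast_diff h1, cast_val h2]

private lemma cast_add_n [NeZero n] (s : ℕ) : ((s + n : ℕ) : Fin n) = ↑s := by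
  push_cast
  simp [Fin.natCast_self]

private lemma ne_cast [NeZero n] {s t : ℕ} (h1 : s ≤ t) (h0 : 0 < t - s) (h2 : t - s < n) :
    (↑s : Fin n) ≠ ↑t := by
  intro he
  have hd := diff_val (n := n) h1 h2
  rw [← he, sub_self] at hd
  simp at hd
  omega

private lemma gp_config [NeZero n] {a b c q δ0 δ1 : ℕ}
    (hsum : a + b + c = n) (ha : 2 ≤ a) (hb : 2 ≤ b) (hc : 1 ≤ c)
    (h2a : 2*a < n) (h2b : 2*b < n) (h2c : 2*(c+1) < n)
    (hδ : (δ0 = 0 ∧ δ1 = 0) ∨ (δ0 = 1 ∧ δ1 = 0) ∨ (δ0 = 1 ∧ δ1 = 1)) :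
    IsGPSet (cycleGraph n) {(↑(q + δ0) : Fin n), ↑(a + q + δ1), ↑(a + b + q)} := by
  have hn2 : 2 ≤ n := by omega
  have e1 : ((↑(a+q+δ1) : Fin n) - ↑(q+δ0)).val = a + δ1 - δ0 := by
    rw [diff_val (by omega) (by omega)]; omega
  have e2 : ((↑(a+b+q) : Fin n) - ↑(a+q+δ1)).val = b - δ1 := by
    rw [diff_val (by omega) (by omega)]; omega
  have e3 : ((↑(q+δ0) : Fin n) - ↑(a+b+q)).val = c + δ0 := by
    rw [show ((↑(q+δ0) : Fin n)) = ↑(q+δ0+n) from (cast_add_n _).symm,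
        diff_val (by omega) (by omega)]
    omega
  exact gp_triple hn2 _ _ _ (by rw [e1]; omega) (by rw [e2]; omega) (by rw [e3]; omega)
    (by rw [e1]; omega) (by rw [e2]; omega) (by rw [e3]; omega)

private lemma gp_config2 [NeZero n] {a b c s t r q δ0 δ1 : ℕ}
    (hsum : a + b + c = n) (ha : 2 ≤ a) (hb : 2 ≤ b) (hc : 1 ≤ c)
    (h2a : 2*a < n) (h2b : 2*b < n) (h2c : 2*(c+1) < n)
    (hδ : (δ0 = 0 ∧ δ1 = 0) ∨ (δ0 = 1 ∧ δ1 = 0) ∨ (δ0 = 1 ∧ δ1 = 1))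
    (hs : s = q + δ0) (ht : t = a + q + δ1) (hr : r = a + b + q) :
    IsGPSet (cycleGraph n) {(↑s : Fin n), ↑t, ↑r} := by
  subst hs ht hr
  exact gp_config hsum ha hb hc h2a h2b h2c hδ

end MobCycleAux
section MobCycleMain

open SimpleGraph Finset
open Fin.NatCast Fin.CommRing

variable {n : ℕ}

private lemma mobile3 {a b c : ℕ} (hsum : a + b + c = n)
    (ha : 2 ≤ a) (hb : 2 ≤ b) (hc : 1 ≤ c)
    (h2a : 2*a < n) (h2b : 2*b < n) (h2c : 2*(c+1) < n) :
    ∃ S : Finset (Fin n), IsMobileGPSet (cycleGraph n) S ∧ S.card = 3 := by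
  haveI : NeZero n := ⟨by omega⟩
  set f : ℕ → Finset (Fin n) :=
    fun i => {(↑(i/3 + min (i%3) 1) : Fin n), ↑(a + i/3 + (i%3)/2), ↑(a + b + i/3)} with hf
  have hshape : ∀ j, f j =
      {(↑(j/3 + min (j%3) 1) : Fin n), ↑(a + j/3 + (j%3)/2), ↑(a + b + j/3)} :=
    fun j => rfl
  have hgp : ∀ j, IsGPSet (cycleGraph n) (f j) := by
    intro j
    rw [hshape j]
    rcases (by omega : j % 3 = 0 ∨ j % 3 = 1 ∨ j % 3 = 2) with h | h | h
    · exact gp_config2 (q := j/3) (δ0 := 0) (δ1 := 0) hsum ha hb hc h2a h2b h2c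
        (Or.inl ⟨rfl, rfl⟩) (by omega) (by omega) (by omega)
    · exact gp_config2 (q := j/3) (δ0 := 1) (δ1 := 0) hsum ha hb hc h2a h2b h2c
        (Or.inr (Or.inl ⟨rfl, rfl⟩)) (by omega) (by omega) (by omega)
    · exact gp_config2 (q := j/3) (δ0 := 1) (δ1 := 1) hsum ha hb hc h2a h2b h2c
        (Or.inr (Or.inr ⟨rfl, rfl⟩)) (by omega) (by omega) (by omega)
  refine ⟨f 0, ⟨hgp 0, 3*n, f, rfl, ?_, ?_⟩, ?_⟩
  · -- legal moves
    intro i _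
    rcases (by omega : i % 3 = 0 ∨ i % 3 = 1 ∨ i % 3 = 2) with h | h | h
    · -- move robot 0 from i/3 to i/3+1
      have hfi : f i = {(↑(i/3) : Fin n), ↑(a + i/3), ↑(a + b + i/3)} := by
        rw [hshape i, show i/3 + min (i%3) 1 = i/3 from by omega,
          show a + i/3 + (i%3)/2 = a + i/3 from by omega]
      have hfi1 : f (i+1) = {(↑(i/3 + 1) : Fin n), ↑(a + i/3), ↑(a + b + i/3)} := by
        rw [hshape (i+1), show (i+1)/3 + min ((i+1)%3) 1 = i/3 + 1 from by omega,
          show a + (i+1)/3 + ((i+1)%3)/2 = a + i/3 from by omega,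
          show a + b + (i+1)/3 = a + b + i/3 from by omega]
      refine ⟨↑(i/3), ?_, ↑(i/3 + 1), ?_, ?_, ?_, hgp (i+1)⟩
      · rw [hfi]; exact mem_insert_self _ _
      · rw [hfi]
        simp only [mem_insert, mem_singleton]
        push_neg
        exact ⟨(ne_cast (by omega) (by omega) (by omega)).symm,
          ne_cast (by omega) (by omega) (by omega),
          ne_cast (by omega) (by omega) (by omega)⟩
      · rw [cycleGraph_adj']
        right
        rw [diff_val (by omega) (by omega)]
        omega
      · rw [hfi, hfi1,
          Finset.erase_insert (by
            simp only [mem_insert, mem_singleton]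
            push_neg
            exact ⟨ne_cast (by omega) (by omega) (by omega),
              ne_cast (by omega) (by omega) (by omega)⟩)]
    · -- move robot 1 from a+i/3 to a+i/3+1
      have hfi : f i = {(↑(i/3 + 1) : Fin n), ↑(a + i/3), ↑(a + b + i/3)} := by
        rw [hshape i, show i/3 + min (i%3) 1 = i/3 + 1 from by omega,
          show a + i/3 + (i%3)/2 = a + i/3 from by omega]
      have hfi1 : f (i+1) = {(↑(i/3 + 1) : Fin n), ↑(a + i/3 + 1), ↑(a + b + i/3)} := by
        rw [hshape (i+1), show (i+1)/3 + min ((i+1)%3) 1 = i/3 + 1 from by omega,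
          show a + (i+1)/3 + ((i+1)%3)/2 = a + i/3 + 1 from by omega,
          show a + b + (i+1)/3 = a + b + i/3 from by omega]
      have hne0 : (↑(a + i/3) : Fin n) ≠ ↑(i/3 + 1) :=
        (ne_cast (by omega) (by omega) (by omega)).symm
      refine ⟨↑(a + i/3), ?_, ↑(a + i/3 + 1), ?_, ?_, ?_, hgp (i+1)⟩
      · rw [hfi]; exact mem_insert_of_mem (mem_insert_self _ _)
      · rw [hfi]
        simp only [mem_insert, mem_singleton]
        push_neg
        exact ⟨(ne_cast (by omega) (by omega) (by omega)).symm,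
          (ne_cast (by omega) (by omega) (by omega)).symm,
          ne_cast (by omega) (by omega) (by omega)⟩
      · rw [cycleGraph_adj']
        right
        rw [diff_val (by omega) (by omega)]
        omega
      · rw [hfi, hfi1, Finset.erase_insert_of_ne hne0.symm,
          Finset.erase_insert (by
            simp only [mem_singleton]
            exact ne_cast (by omega) (by omega) (by omega))]
        ext w
        simp only [Finset.mem_insert, Finset.mem_singleton]
        tauto
    · -- move robot 2 from a+b+i/3 to a+b+i/3+1
      have hfi : f i = {(↑(i/3 + 1) : Fin n), ↑(a + i/3 + 1), ↑(a + b + i/3)} := by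
        rw [hshape i, show i/3 + min (i%3) 1 = i/3 + 1 from by omega,
          show a + i/3 + (i%3)/2 = a + i/3 + 1 from by omega]
      have hfi1 : f (i+1)
          = {(↑(i/3 + 1) : Fin n), ↑(a + i/3 + 1), ↑(a + b + i/3 + 1)} := by
        rw [hshape (i+1), show (i+1)/3 + min ((i+1)%3) 1 = i/3 + 1 from by omega,
          show a + (i+1)/3 + ((i+1)%3)/2 = a + i/3 + 1 from by omega,
          show a + b + (i+1)/3 = a + b + i/3 + 1 from by omega]
      have hne0 : (↑(a + b + i/3) : Fin n) ≠ ↑(i/3 + 1) :=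
        (ne_cast (by omega) (by omega) (by omega)).symm
      have hne1 : (↑(a + b + i/3) : Fin n) ≠ ↑(a + i/3 + 1) :=
        (ne_cast (by omega) (by omega) (by omega)).symm
      refine ⟨↑(a + b + i/3), ?_, ↑(a + b + i/3 + 1), ?_, ?_, ?_, hgp (i+1)⟩
      · rw [hfi]
        exact mem_insert_of_mem (mem_insert_of_mem (mem_singleton_self _))
      · rw [hfi]
        simp only [mem_insert, mem_singleton]
        push_neg
        exact ⟨(ne_cast (by omega) (by omega) (by omega)).symm,
          (ne_cast (by omega) (by omega) (by omega)).symm,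
          (ne_cast (by omega) (by omega) (by omega)).symm⟩
      · rw [cycleGraph_adj']
        right
        rw [diff_val (by omega) (by omega)]
        omega
      · rw [hfi, hfi1, Finset.erase_insert_of_ne hne0.symm,
          Finset.erase_insert_of_ne hne1.symm, Finset.erase_singleton]
        ext w
        simp only [Finset.mem_insert, Finset.mem_singleton, Finset.notMem_empty, or_false]
        tauto
  · -- coverage
    intro v
    refine ⟨3 * v.val, by have := v.isLt; omega, ?_⟩
    rw [hshape (3 * v.val),
      show (3*v.val)/3 + min ((3*v.val)%3) 1 = v.val from by omega]
    simp [Fin.cast_val_eq_self]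
  · -- card
    have h0 : f 0 = {(↑(0:ℕ) : Fin n), ↑a, ↑(a + b)} := by
      rw [hshape 0]; norm_num
    rw [h0, Finset.card_insert_of_notMem (by
        simp only [mem_insert, mem_singleton]
        push_neg
        exact ⟨ne_cast (by omega) (by omega) (by omega),
          ne_cast (by omega) (by omega) (by omega)⟩),
      Finset.card_insert_of_notMem (by
        simp only [mem_singleton]
        exact ne_cast (by omega) (by omega) (by omega)),
      Finset.card_singleton]

end MobCycleMain

set_option maxHeartbeats 1000000 in
/-- For every `n ≥ 3` with `n ≠ 4` and `n ≠ 6`, `mob(Cₙ) = 3`. -/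
theorem stmt4 (n : ℕ) (hn : 3 ≤ n) (h4 : n ≠ 4) (h6 : n ≠ 6) :
    mob (SimpleGraph.cycleGraph n) = 3 := by
  have hn2 : 2 ≤ n := by omega
  have hmem : ∃ S : Finset (Fin n),
      IsMobileGPSet (SimpleGraph.cycleGraph n) S ∧ S.card = 3 := by
    rcases eq_or_ne n 3 with rfl | hne3
    · refine ⟨Finset.univ, ⟨?_, 0, fun _ => Finset.univ, rfl,
        fun i hi => absurd hi (Nat.not_lt_zero i),
        fun v => ⟨0, le_refl 0, Finset.mem_univ v⟩⟩, by simp⟩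
      intro x _ y _ z _ hxy hyz hxz
      rw [SimpleGraph.cycleGraph_three_eq_top, SimpleGraph.dist_top,
        SimpleGraph.dist_top, SimpleGraph.dist_top]
      simp [hxy, hyz, hxz]
    · rcases Nat.even_or_odd n with ⟨k, hk⟩ | ⟨k, hk⟩
      · -- n even, hence n ≥ 8
        exact mobile3 (a := n/2 - 1) (b := n/2 - 1) (c := 2)
          (by omega) (by omega) (by omega) (by omega)
          (by omega) (by omega) (by omega)
      · -- n odd, hence n ≥ 5
        exact mobile3 (a := (n-1)/2) (b := (n-1)/2) (c := 1)
          (by omega) (by omega) (by omega) (by omega)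
          (by omega) (by omega) (by omega)
  obtain ⟨S3, hS3, hS3c⟩ := hmem
  have hmem' : 3 ∈ {k | ∃ S : Finset (Fin n),
      IsMobileGPSet (SimpleGraph.cycleGraph n) S ∧ S.card = k} := ⟨S3, hS3, hS3c⟩
  have hub : ∀ k ∈ {k | ∃ S : Finset (Fin n),
      IsMobileGPSet (SimpleGraph.cycleGraph n) S ∧ S.card = k}, k ≤ 3 := by
    rintro k ⟨S, hS, rfl⟩
    exact gp_card_le hn hS.1
  rw [mob]
  exact le_antisymm (csSup_le ⟨3, hmem'⟩ hub) (le_csSup ⟨3, fun k hk => hub k hk⟩ hmem')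
end

section
/- The Petersen graph P satisfies mob(P) = 4. -/
/-- The Kneser graph `K(n,k)`: vertices are the `k`-element subsets of an
`n`-element set, two vertices being adjacent iff the corresponding sets are
disjoint. -/
def kneserGraph (n k : ℕ) : SimpleGraph {s : Finset (Fin n) // s.card = k} where
  Adj a b := a ≠ b ∧ Disjoint a.1 b.1
  symm := ⟨fun _ _ h => ⟨h.1.symm, h.2.symm⟩⟩
  loopless := ⟨fun _ h => h.1 rfl⟩

/-! ### Auxiliary setup -/

abbrev V5 := {s : Finset (Fin 5) // s.card = 2}

abbrev P5 : SimpleGraph V5 := kneserGraph 5 2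

def nadj (a b : V5) : Prop := a ≠ b ∧ Disjoint a.1 b.1

instance : DecidableRel nadj := fun _ _ => instDecidableAnd

lemma nadj_iff (a b : V5) : P5.Adj a b ↔ nadj a b := Iff.rfl

/-! ### Distance lemmas for the Petersen graph -/

set_option maxRecDepth 10000 in
lemma common_nbr : ∀ x y : V5, x ≠ y → ¬ nadj x y →
    ∃ w : V5, nadj x w ∧ nadj w y := by decide

lemma p5_dist_one {x y : V5} (h : nadj x y) : P5.dist x y = 1 :=
  SimpleGraph.dist_eq_one_iff_adj.mpr h

lemma dist_two {x y : V5} (hxy : x ≠ y) (hna : ¬ nadj x y) : P5.dist x y = 2 := by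
  obtain ⟨w, h1, h2⟩ := common_nbr x y hxy hna
  let hw : P5.Walk x y :=
    SimpleGraph.Walk.cons ((nadj_iff x w).mpr h1)
      (SimpleGraph.Walk.cons ((nadj_iff w y).mpr h2) SimpleGraph.Walk.nil)
  have hle : P5.dist x y ≤ 2 := SimpleGraph.dist_le hw
  have hpos : 0 < P5.dist x y := SimpleGraph.Reachable.pos_dist_of_ne ⟨hw⟩ hxy
  have hne1 : P5.dist x y ≠ 1 := fun h => hna (SimpleGraph.dist_eq_one_iff_adj.mp h)
  omega

/-! ### General position via adjacency -/

def gp' (S : Finset V5) : Prop :=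
  ∀ x ∈ S, ∀ y ∈ S, ∀ z ∈ S, x ≠ y → y ≠ z → x ≠ z →
    ¬(nadj x y ∧ nadj y z ∧ ¬ nadj x z)

set_option synthInstance.maxSize 2000 in
set_option maxHeartbeats 1000000 in
instance : DecidablePred gp' := fun S => by unfold gp'; infer_instance

lemma dist_cases {x y : V5} (h : x ≠ y) : P5.dist x y = 1 ∨ P5.dist x y = 2 := by
  by_cases hxy : nadj x y
  · exact Or.inl (p5_dist_one hxy)
  · exact Or.inr (dist_two h hxy)

lemma gp_iff (S : Finset V5) : IsGPSet P5 S ↔ gp' S := by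
  constructor
  · intro h x hx y hy z hz hxy hyz hxz ⟨a1, a2, a3⟩
    exact h x hx y hy z hz hxy hyz hxz
      (by rw [p5_dist_one a1, p5_dist_one a2, dist_two hxz a3])
  · intro h x hx y hy z hz hxy hyz hxz heq
    by_cases a1 : nadj x y
    · by_cases a2 : nadj y z
      · by_cases a3 : nadj x z
        · rw [p5_dist_one a1, p5_dist_one a2, p5_dist_one a3] at heq; omega
        · exact h x hx y hy z hz hxy hyz hxz ⟨a1, a2, a3⟩
      · rcases dist_cases hxz with h3 | h3 <;>
          rw [p5_dist_one a1, dist_two hyz a2, h3] at heq <;> omega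
    · rcases dist_cases hyz with h2 | h2 <;> rcases dist_cases hxz with h3 | h3 <;>
        rw [dist_two hxy a1, h2, h3] at heq <;> omega

lemma gp'_mono {S T : Finset V5} (hST : S ⊆ T) (h : gp' T) : gp' S :=
  fun x hx y hy z hz => h x (hST hx) y (hST hy) z (hST hz)

/-! ### Numeric encoding on `Fin 10` -/

def adjMask : Fin 10 → ℕ
  | 0 => 896 | 1 => 608 | 2 => 336 | 3 => 176 | 4 => 524
  | 5 => 266 | 6 => 134 | 7 => 73  | 8 => 37  | 9 => 19

def adjB (i j : Fin 10) : Bool := (adjMask i).testBit (j : ℕ)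

def memMask : Fin 5 → ℕ
  | 0 => 15 | 1 => 113 | 2 => 402 | 3 => 676 | 4 => 840

def memB (a : Fin 5) (i : Fin 10) : Bool := (memMask a).testBit (i : ℕ)

def bits (m : ℕ) : List (Fin 10) := (List.finRange 10).filter (fun j => m.testBit (j : ℕ))

def gpM (l : List (Fin 10)) : Bool :=
  l.all fun x => l.all fun y => l.all fun z =>
    !(x ≠ y && y ≠ z && x ≠ z && adjB x y && adjB y z && !adjB x z)

set_option maxRecDepth 40000 in
set_option maxHeartbeats 2000000 in
lemma claimM : ∀ m : Fin 1024, 5 ≤ (bits m.1).length → gpM (bits m.1) = true →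
    ∃ a : Fin 5, ∀ j ∈ bits m.1, memB a j = false := by decide

def idx (p : V5) : Fin 10 :=
  if p.1 = {0,1} then 0 else if p.1 = {0,2} then 1 else if p.1 = {0,3} then 2
  else if p.1 = {0,4} then 3 else if p.1 = {1,2} then 4 else if p.1 = {1,3} then 5
  else if p.1 = {1,4} then 6 else if p.1 = {2,3} then 7 else if p.1 = {2,4} then 8
  else 9

lemma idx_inj : ∀ p q : V5, idx p = idx q → p = q := by decide

lemma idx_adj : ∀ p q : V5, nadj p q ↔ adjB (idx p) (idx q) = true := by decide

lemma idx_mem : ∀ (a : Fin 5) (p : V5), a ∈ p.1 ↔ memB a (idx p) = true := by decide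

lemma star_nonempty : ∀ a : Fin 5, ∃ w : V5, a ∈ w.1 := by decide

set_option maxRecDepth 4000 in
lemma claimC : ∀ a b : Fin 5, a ≠ b →
    (Finset.univ.filter (fun p : V5 => a ∉ p.1 ∧ b ∉ p.1)).card = 3 := by decide

/-! ### Every general position set with at least 5 vertices avoids a point -/

lemma five (T : Finset V5) (hT : gp' T) (hc : T.card = 5) :
    ∃ a : Fin 5, ∀ p ∈ T, a ∉ p.1 := by
  have hlen : T.toList.length = 5 := by rw [Finset.length_toList, hc]
  have hmem : ∀ p, p ∈ T.toList ↔ p ∈ T := fun p => Finset.mem_toList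
  have hnd : T.toList.Nodup := T.nodup_toList
  obtain ⟨x1, x2, x3, x4, x5, hl⟩ : ∃ a b c d e, T.toList = [a, b, c, d, e] := by
    match hEq : T.toList, hlen with
    | [a, b, c, d, e], _ => exact ⟨a, b, c, d, e, rfl⟩
  rw [hl] at hmem hnd
  have hx1 : x1 ∈ T := (hmem x1).mp (by simp)
  have hx2 : x2 ∈ T := (hmem x2).mp (by simp)
  have hx3 : x3 ∈ T := (hmem x3).mp (by simp)
  have hx4 : x4 ∈ T := (hmem x4).mp (by simp)
  have hx5 : x5 ∈ T := (hmem x5).mp (by simp)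
  have htb : ∀ j : Fin 10,
      (2 ^ (idx x1 : ℕ) ||| 2 ^ (idx x2 : ℕ) ||| 2 ^ (idx x3 : ℕ) ||| 2 ^ (idx x4 : ℕ)
        ||| 2 ^ (idx x5 : ℕ)).testBit (j : ℕ) = true ↔
      j ∈ [idx x1, idx x2, idx x3, idx x4, idx x5] := by
    intro j
    simp only [Nat.testBit_or, Nat.testBit_two_pow, Bool.or_eq_true, decide_eq_true_eq,
      List.mem_cons, List.not_mem_nil, or_false]
    constructor
    · rintro ((((h | h) | h) | h) | h) <;> have := (Fin.val_injective h).symm <;> tauto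
    · rintro (h | h | h | h | h) <;> subst h <;> tauto
  set m : ℕ := 2 ^ (idx x1 : ℕ) ||| 2 ^ (idx x2 : ℕ) ||| 2 ^ (idx x3 : ℕ)
      ||| 2 ^ (idx x4 : ℕ) ||| 2 ^ (idx x5 : ℕ) with hm
  have hbits : ∀ j : Fin 10, j ∈ bits m ↔ j ∈ [idx x1, idx x2, idx x3, idx x4, idx x5] := by
    intro j
    rw [bits, List.mem_filter]
    simp only [List.mem_finRange, true_and]
    exact htb j
  have hmlt : m < 1024 := by
    have h2 : ∀ i : Fin 10, 2 ^ (i : ℕ) < 2 ^ 10 :=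
      fun i => Nat.pow_lt_pow_right (by norm_num) (by omega)
    have : m < 2 ^ 10 :=
      Nat.or_lt_two_pow (Nat.or_lt_two_pow (Nat.or_lt_two_pow
        (Nat.or_lt_two_pow (h2 _) (h2 _)) (h2 _)) (h2 _)) (h2 _)
    simpa using this
  have hsub : [idx x1, idx x2, idx x3, idx x4, idx x5] ⊆ bits m :=
    fun j hj => (hbits j).mpr hj
  have hndI : ([idx x1, idx x2, idx x3, idx x4, idx x5] : List (Fin 10)).Nodup := by
    have : ([x1, x2, x3, x4, x5].map idx).Nodup :=
      List.Nodup.map_on (fun a _ b _ h => idx_inj a b h) hnd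
    simpa using this
  have hlen5 : 5 ≤ (bits m).length := by
    have := (hndI.subperm hsub).length_le
    simpa using this
  have hfind : ∀ j : Fin 10, j ∈ bits m → ∃ p, p ∈ T ∧ idx p = j := by
    intro j hj
    have h5 := (hbits j).mp hj
    simp only [List.mem_cons, List.not_mem_nil, or_false] at h5
    rcases h5 with h | h | h | h | h
    exacts [⟨x1, hx1, h.symm⟩, ⟨x2, hx2, h.symm⟩, ⟨x3, hx3, h.symm⟩,
      ⟨x4, hx4, h.symm⟩, ⟨x5, hx5, h.symm⟩]
  have hgpM : gpM (bits m) = true := by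
    rw [gpM]
    simp only [List.all_eq_true]
    intro jx hjx jy hjy jz hjz
    obtain ⟨px, hpx, hix⟩ := hfind jx hjx
    obtain ⟨py, hpy, hiy⟩ := hfind jy hjy
    obtain ⟨pz, hpz, hiz⟩ := hfind jz hjz
    subst hix hiy hiz
    by_contra hcon
    simp only [Bool.not_eq_true, Bool.not_eq_false, Bool.and_eq_true, Bool.not_eq_true',
      bne_iff_ne, ne_eq, decide_eq_true_eq] at hcon
    obtain ⟨⟨⟨⟨⟨hne1, hne2⟩, hne3⟩, ha1⟩, ha2⟩, ha3⟩ := hcon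
    have hpxy : px ≠ py := fun h => hne1 (by rw [h])
    have hpyz : py ≠ pz := fun h => hne2 (by rw [h])
    have hpxz : px ≠ pz := fun h => hne3 (by rw [h])
    exact hT px hpx py hpy pz hpz hpxy hpyz hpxz
      ⟨(idx_adj px py).mpr ha1, (idx_adj py pz).mpr ha2,
       fun h => by rw [(idx_adj px pz).mp h] at ha3; exact absurd ha3 (by simp)⟩
  obtain ⟨a, ha⟩ := claimM ⟨m, hmlt⟩ hlen5 hgpM
  refine ⟨a, fun p hp => ?_⟩
  have hpl : p ∈ [x1, x2, x3, x4, x5] := by rw [← hl]; exact Finset.mem_toList.mpr hp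
  have hidx : idx p ∈ bits m := by
    apply (hbits (idx p)).mpr
    simp only [List.mem_cons, List.not_mem_nil, or_false] at hpl
    rcases hpl with h | h | h | h | h <;> subst h <;> simp
  have hfalse := ha (idx p) hidx
  intro hap
  rw [(idx_mem a p).mp hap] at hfalse
  exact absurd hfalse (by simp)

lemma avoid_of_gp {S : Finset V5} (h : gp' S) (hc : 5 ≤ S.card) :
    ∃ a : Fin 5, ∀ p ∈ S, a ∉ p.1 := by
  obtain ⟨t, hts, htc⟩ := Finset.exists_subset_card_eq hc
  obtain ⟨a, ha⟩ := five t (gp'_mono hts h) htc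
  refine ⟨a, fun p hp => ?_⟩
  by_cases hpt : p ∈ t
  · exact ha p hpt
  · have htne : t.Nonempty := Finset.card_pos.mp (by omega)
    obtain ⟨u, hu⟩ := htne
    have hpe : p ∉ t.erase u := fun h => hpt (Finset.mem_of_mem_erase h)
    have hec : (t.erase u).card = 4 := by rw [Finset.card_erase_of_mem hu, htc]
    have ht'c : (insert p (t.erase u)).card = 5 := by
      rw [Finset.card_insert_of_notMem hpe, hec]
    have ht's : insert p (t.erase u) ⊆ S := by
      intro q hq
      rcases Finset.mem_insert.mp hq with h | h
      · exact h ▸ hp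
      · exact hts (Finset.mem_of_mem_erase h)
    obtain ⟨b, hb⟩ := five _ (gp'_mono ht's h) ht'c
    by_cases hab : a = b
    · exact hab ▸ hb p (Finset.mem_insert_self _ _)
    · exfalso
      have hsub : t.erase u ⊆ Finset.univ.filter (fun q : V5 => a ∉ q.1 ∧ b ∉ q.1) := by
        intro q hq
        refine Finset.mem_filter.mpr ⟨Finset.mem_univ _, ?_, ?_⟩
        · exact ha q (Finset.mem_of_mem_erase hq)
        · exact hb q (Finset.mem_insert_of_mem hq)
      have := Finset.card_le_card hsub
      rw [hec, claimC a b hab] at this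
      omega

/-! ### Upper bound -/

lemma mobile_card_le (S : Finset V5) (h : IsMobileGPSet P5 S) : S.card ≤ 4 := by
  by_contra hlt
  push_neg at hlt
  have hc5 : 5 ≤ S.card := hlt
  obtain ⟨hgp, m, f, hf0, hmoves, hcover⟩ := h
  obtain ⟨a, ha⟩ := avoid_of_gp ((gp_iff S).mp hgp) hc5
  have inv : ∀ i, i ≤ m → gp' (f i) ∧ 5 ≤ (f i).card ∧ ∀ p ∈ f i, a ∉ p.1 := by
    intro i
    induction i with
    | zero => intro _; rw [hf0]; exact ⟨(gp_iff S).mp hgp, hc5, ha⟩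
    | succ i ih =>
      intro hi1
      have hi : i < m := by omega
      obtain ⟨hgpi, hci, hai⟩ := ih (by omega)
      obtain ⟨u, hu, v, hv, hadj, hT, hTgp⟩ := hmoves i hi
      have hgp1 : gp' (f (i + 1)) := (gp_iff _).mp hTgp
      have hve : v ∉ (f i).erase u := fun hh => hv (Finset.mem_of_mem_erase hh)
      have hc1 : (f (i + 1)).card = (f i).card := by
        rw [hT, Finset.card_insert_of_notMem hve, Finset.card_erase_of_mem hu]
        have : 1 ≤ (f i).card := Finset.card_pos.mpr ⟨u, hu⟩
        omega
      have hc5' : 5 ≤ (f (i + 1)).card := by omega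
      refine ⟨hgp1, hc5', ?_⟩
      obtain ⟨b, hb⟩ := avoid_of_gp hgp1 hc5'
      by_cases hab : a = b
      · exact hab ▸ hb
      · exfalso
        have hsub : (f i).erase u ⊆
            Finset.univ.filter (fun q : V5 => a ∉ q.1 ∧ b ∉ q.1) := by
          intro q hq
          refine Finset.mem_filter.mpr ⟨Finset.mem_univ _, ?_, ?_⟩
          · exact hai q (Finset.mem_of_mem_erase hq)
          · exact hb q (by rw [hT]; exact Finset.mem_insert_of_mem hq)
        have hle := Finset.card_le_card hsub
        rw [Finset.card_erase_of_mem hu, claimC a b hab] at hle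
        omega
  obtain ⟨w, hw⟩ := star_nonempty a
  obtain ⟨i, him, hwi⟩ := hcover w
  exact (inv i him).2.2 w hwi hw

/-! ### Lower bound : an explicit mobile set of size 4 -/

def p01 : V5 := ⟨{0,1}, by decide⟩
def p02 : V5 := ⟨{0,2}, by decide⟩
def p03 : V5 := ⟨{0,3}, by decide⟩
def p04 : V5 := ⟨{0,4}, by decide⟩
def p12 : V5 := ⟨{1,2}, by decide⟩
def p13 : V5 := ⟨{1,3}, by decide⟩
def p14 : V5 := ⟨{1,4}, by decide⟩
def p23 : V5 := ⟨{2,3}, by decide⟩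
def p24 : V5 := ⟨{2,4}, by decide⟩
def p34 : V5 := ⟨{3,4}, by decide⟩

def cfg : ℕ → Finset V5
  | 0 => {p01, p02, p03, p04}
  | 1 => {p02, p03, p04, p23}
  | 2 => {p03, p04, p23, p34}
  | 3 => {p04, p23, p24, p34}
  | 4 => {p12, p23, p24, p34}
  | 5 => {p12, p14, p24, p34}
  | _ => {p12, p13, p14, p34}

lemma cfg_legal : ∀ i < 6, LegalMove P5 (cfg i) (cfg (i + 1)) := by
  intro i hi
  interval_cases i
  · exact ⟨p01, by decide, p23, by decide, (nadj_iff _ _).mpr (by decide), by decide,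
      (gp_iff _).mpr (by decide)⟩
  · exact ⟨p02, by decide, p34, by decide, (nadj_iff _ _).mpr (by decide), by decide,
      (gp_iff _).mpr (by decide)⟩
  · exact ⟨p03, by decide, p24, by decide, (nadj_iff _ _).mpr (by decide), by decide,
      (gp_iff _).mpr (by decide)⟩
  · exact ⟨p04, by decide, p12, by decide, (nadj_iff _ _).mpr (by decide), by decide,
      (gp_iff _).mpr (by decide)⟩
  · exact ⟨p23, by decide, p14, by decide, (nadj_iff _ _).mpr (by decide), by decide,
      (gp_iff _).mpr (by decide)⟩
  · exact ⟨p24, by decide, p13, by decide, (nadj_iff _ _).mpr (by decide), by decide,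
      (gp_iff _).mpr (by decide)⟩

lemma cfg_cover : ∀ w : V5, ∃ i ∈ Finset.range 7, w ∈ cfg i := by decide

lemma mobile4 : IsMobileGPSet P5 (cfg 0) := by
  refine ⟨(gp_iff _).mpr (by decide), 6, cfg, rfl, cfg_legal, fun w => ?_⟩
  obtain ⟨i, hi, hw⟩ := cfg_cover w
  exact ⟨i, by have := Finset.mem_range.mp hi; omega, hw⟩

/-! ### Main theorem -/

/-- The Petersen graph `K(5,2)` satisfies `mob(P) = 4`. -/
theorem stmt5 : mob (kneserGraph 5 2) = 4 := by
  have h4 : (4 : ℕ) ∈ {n | ∃ S : Finset V5, IsMobileGPSet P5 S ∧ S.card = n} :=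
    ⟨cfg 0, mobile4, by decide⟩
  have hb : ∀ n ∈ {n | ∃ S : Finset V5, IsMobileGPSet P5 S ∧ S.card = n}, n ≤ 4 := by
    rintro n ⟨S, hS, rfl⟩
    exact mobile_card_le S hS
  exact le_antisymm (csSup_le ⟨4, h4⟩ hb) (le_csSup ⟨4, hb⟩ h4)
end

section
/- A connected simple graph G with n(G) ≥ 2 vertices satisfies mob(G) = n(G) if and only if G is a complete graph. -/
/-- A connected simple graph `G` with at least 2 vertices satisfies
`mob(G) = n(G)` iff `G` is complete. -/
theorem stmt6 {V : Type*} [Fintype V] [DecidableEq V] (G : SimpleGraph V)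
    (hG : G.Connected) (hn : 2 ≤ Fintype.card V) :
    mob G = Fintype.card V ↔ G = ⊤ := by
  constructor
  · intro hmob
    -- the set achieves its sSup
    have hbdd : BddAbove {n | ∃ S : Finset V, IsMobileGPSet G S ∧ S.card = n} := by
      refine ⟨Fintype.card V, ?_⟩
      rintro n ⟨S, _, rfl⟩
      exact Finset.card_le_univ S
    have hne : {n | ∃ S : Finset V, IsMobileGPSet G S ∧ S.card = n}.Nonempty := by
      by_contra h
      rw [Set.not_nonempty_iff_eq_empty] at h
      rw [mob, h] at hmob
      simp [csSup_empty] at hmob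
      omega
    have hmem := Nat.sSup_mem hne hbdd
    rw [mob] at hmob
    rw [hmob] at hmem
    obtain ⟨S, ⟨hgp, _⟩, hcard⟩ := hmem
    have hSuniv : S = Finset.univ := Finset.card_eq_iff_eq_univ S |>.mp hcard
    subst hSuniv
    ext x y
    simp only [SimpleGraph.top_adj]
    constructor
    · exact fun h => h.ne
    · intro hxy
      by_contra hadj
      have hd : 0 < G.dist x y := (hG.pos_dist_of_ne hxy)
      have hd1 : G.dist x y ≠ 1 := by
        intro h1
        exact hadj ((SimpleGraph.dist_eq_one_iff_adj).mp h1)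
      obtain ⟨p, hp⟩ := (hG x y).exists_walk_length_eq_dist
      cases p with
      | nil => exact absurd rfl hxy
      | cons h q =>
        rename_i w
        -- w is the second vertex
        have hq : q.length = G.dist x y - 1 := by
          simp [SimpleGraph.Walk.length_cons] at hp; omega
        have hdw1 : G.dist x w = 1 := SimpleGraph.dist_eq_one_iff_adj.mpr h
        have hdwz : G.dist w y = G.dist x y - 1 := by
          have hle : G.dist w y ≤ G.dist x y - 1 := by
            rw [← hq]; exact SimpleGraph.dist_le q
          have hge : G.dist x y ≤ G.dist x w + G.dist w y :=
            hG.dist_triangle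
          omega
        have hxw : x ≠ w := h.ne
        have hwy : w ≠ y := by
          intro he; subst he
          rw [SimpleGraph.dist_self] at hdwz; omega
        have := hgp x (Finset.mem_univ x) w (Finset.mem_univ w) y (Finset.mem_univ y)
          hxw hwy hxy
        rw [hdw1, hdwz] at this
        omega
  · intro htop
    subst htop
    have hgp : IsGPSet (⊤ : SimpleGraph V) Finset.univ := by
      intro x _ y _ z _ hxy hyz hxz
      have d1 : (⊤ : SimpleGraph V).dist x y = 1 :=
        SimpleGraph.dist_eq_one_iff_adj.mpr (by simp [hxy])
      have d2 : (⊤ : SimpleGraph V).dist y z = 1 :=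
        SimpleGraph.dist_eq_one_iff_adj.mpr (by simp [hyz])
      have d3 : (⊤ : SimpleGraph V).dist x z = 1 :=
        SimpleGraph.dist_eq_one_iff_adj.mpr (by simp [hxz])
      omega
    have hmobile : IsMobileGPSet (⊤ : SimpleGraph V) Finset.univ := by
      refine ⟨hgp, 0, fun _ => Finset.univ, rfl, by omega, fun v => ⟨0, le_refl 0, Finset.mem_univ v⟩⟩
    have hmem : Fintype.card V ∈ {n | ∃ S : Finset V, IsMobileGPSet (⊤ : SimpleGraph V) S ∧ S.card = n} :=
      ⟨Finset.univ, hmobile, Finset.card_univ⟩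
    have hbdd : BddAbove {n | ∃ S : Finset V, IsMobileGPSet (⊤ : SimpleGraph V) S ∧ S.card = n} := by
      refine ⟨Fintype.card V, ?_⟩
      rintro n ⟨S, _, rfl⟩
      exact Finset.card_le_univ S
    refine le_antisymm (csSup_le ⟨_, hmem⟩ ?_) (le_csSup hbdd hmem)
    rintro n ⟨S, _, rfl⟩
    exact Finset.card_le_univ S
end

section
/- A connected simple graph G with n = n(G) ≥ 3 vertices satisfies mob(G) = n − 1 if and only if G is obtained from the complete graph K_{n−1} by attaching a leaf to one of its vertices (i.e., G consists of a clique on n−1 vertices plus one additional vertex adjacent to exactly one clique vertex). -/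
section Aux

variable {V : Type*}

lemma dist_two_s7 {G : SimpleGraph V} (hG : G.Connected) {x y z : V} (hxy : x ≠ y)
    (hna : ¬ G.Adj x y) (h1 : G.Adj x z) (h2 : G.Adj z y) : G.dist x y = 2 := by
  have hle : G.dist x y ≤ 2 := by
    have := SimpleGraph.dist_le
      (SimpleGraph.Walk.cons h1 (SimpleGraph.Walk.cons h2 SimpleGraph.Walk.nil))
    simpa using this
  have h0 : G.dist x y ≠ 0 := (hG.pos_dist_of_ne hxy).ne'
  have h1' : G.dist x y ≠ 1 := fun h => hna (SimpleGraph.dist_eq_one_iff_adj.mp h)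
  omega

lemma first_step {G : SimpleGraph V} (hG : G.Connected) {x y : V} (hxy : x ≠ y) :
    ∃ z, G.Adj x z ∧ G.dist z y + 1 = G.dist x y := by
  have h0 : G.dist x y ≠ 0 := (hG.pos_dist_of_ne hxy).ne'
  obtain ⟨p, hp⟩ := SimpleGraph.exists_walk_of_dist_ne_zero h0
  cases p with
  | nil => exact absurd rfl hxy
  | @cons _ z _ h q =>
      refine ⟨z, h, ?_⟩
      simp only [SimpleGraph.Walk.length_cons] at hp
      have hq : G.dist z y ≤ q.length := SimpleGraph.dist_le q
      have htri : G.dist x y ≤ G.dist x z + G.dist z y := hG.dist_triangle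
      have hx1 : G.dist x z = 1 := SimpleGraph.dist_eq_one_iff_adj.mpr h
      omega

variable [Fintype V] [DecidableEq V]

lemma no_mid {G : SimpleGraph V} (hG : G.Connected)
    {p x y z : V} (hGP : IsGPSet G (Finset.univ.erase p)) (hx : x ≠ p) (hy : y ≠ p) (hz : z ≠ p)
    (hxy : x ≠ y) (hyz : y ≠ z) (hxz : x ≠ z) (h1 : G.Adj x y) (h2 : G.Adj y z)
    (h3 : ¬ G.Adj x z) : False := by
  have := hGP x (by simp [hx]) y (by simp [hy]) z (by simp [hz]) hxy hyz hxz
  rw [SimpleGraph.dist_eq_one_iff_adj.mpr h1, SimpleGraph.dist_eq_one_iff_adj.mpr h2,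
    dist_two_s7 hG hxz h3 h1 h2] at this
  exact this rfl

lemma gp_pair {G : SimpleGraph V} (hG : G.Connected)
    {v : V} (hGP : IsGPSet G (Finset.univ.erase v)) {x y : V} (hx : x ≠ v) (hy : y ≠ v)
    (hxy : x ≠ y) (hna : ¬ G.Adj x y) : G.Adj x v ∧ G.Adj v y := by
  have h0 : G.dist x y ≠ 0 := (hG.pos_dist_of_ne hxy).ne'
  have h1 : G.dist x y ≠ 1 := fun h => hna (SimpleGraph.dist_eq_one_iff_adj.mp h)
  obtain ⟨z, hxz, hz⟩ := first_step hG hxy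
  have hzv : z = v := by
    by_contra hzv
    have hzy : z ≠ y := by
      rintro rfl
      rw [SimpleGraph.dist_self] at hz; omega
    apply hGP x (by simp [hx]) z (by simp [hzv]) y (by simp [hy]) hxz.ne hzy hxy
    rw [SimpleGraph.dist_eq_one_iff_adj.mpr hxz]
    omega
  rw [hzv] at hxz
  obtain ⟨z', hyz', hz'⟩ := first_step hG hxy.symm
  have hz'2 : G.dist x z' + 1 = G.dist x y := by
    rw [SimpleGraph.dist_comm (u := x) (v := z'), SimpleGraph.dist_comm (u := x) (v := y)]
    exact hz'
  have hz'v : z' = v := by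
    by_contra hz'v
    have hxz' : x ≠ z' := by
      rintro rfl
      rw [SimpleGraph.dist_self] at hz'2; omega
    apply hGP x (by simp [hx]) z' (by simp [hz'v]) y (by simp [hy]) hxz' hyz'.ne' hxy
    rw [SimpleGraph.dist_eq_one_iff_adj.mpr hyz'.symm]
    omega
  rw [hz'v] at hyz'
  exact ⟨hxz, hyz'.symm⟩

lemma gp_of_clique {G : SimpleGraph V} {v : V}
    (hcl : ∀ x y : V, x ≠ v → y ≠ v → x ≠ y → G.Adj x y) :
    IsGPSet G (Finset.univ.erase v) := by
  intro x hx y hy z hz hxy hyz hxz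
  simp only [Finset.mem_erase, Finset.mem_univ, and_true] at hx hy hz
  rw [SimpleGraph.dist_eq_one_iff_adj.mpr (hcl x y hx hy hxy),
      SimpleGraph.dist_eq_one_iff_adj.mpr (hcl y z hy hz hyz),
      SimpleGraph.dist_eq_one_iff_adj.mpr (hcl x z hx hz hxz)]
  omega

lemma gp_T {G : SimpleGraph V} (hG : G.Connected) {v w : V} (hvw : G.Adj v w)
    (hleaf : ∀ x, G.Adj v x → x = w)
    (hcl : ∀ x y : V, x ≠ v → y ≠ v → x ≠ y → G.Adj x y) :
    IsGPSet G (Finset.univ.erase w) := by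
  have hwv : w ≠ v := hvw.ne'
  have hdist : ∀ a, a ≠ v → a ≠ w → G.dist v a = 2 := by
    intro a hav haw
    exact dist_two_s7 hG (Ne.symm hav) (fun h => haw (hleaf a h)) hvw
      (hcl w a hwv hav (fun h => haw h.symm))
  intro x hx y hy z hz hxy hyz hxz
  simp only [Finset.mem_erase, Finset.mem_univ, and_true] at hx hy hz
  by_cases hxv : x = v
  · have hyv : y ≠ v := fun h => hxy (by rw [hxv, h])
    have hzv : z ≠ v := fun h => hxz (by rw [hxv, h])
    rw [hxv, hdist y hyv hy, hdist z hzv hz,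
      SimpleGraph.dist_eq_one_iff_adj.mpr (hcl y z hyv hzv hyz)]
    omega
  by_cases hyv : y = v
  · have hzv : z ≠ v := fun h => hyz (by rw [hyv, h])
    rw [hyv, SimpleGraph.dist_comm (u := x) (v := v), hdist x hxv hx, hdist z hzv hz,
      SimpleGraph.dist_eq_one_iff_adj.mpr (hcl x z hxv hzv hxz)]
    omega
  by_cases hzv : z = v
  · rw [hzv, SimpleGraph.dist_comm (u := y) (v := v), SimpleGraph.dist_comm (u := x) (v := v),
      hdist y hyv hy, hdist x hxv hx,
      SimpleGraph.dist_eq_one_iff_adj.mpr (hcl x y hxv hyv hxy)]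
    omega
  · rw [SimpleGraph.dist_eq_one_iff_adj.mpr (hcl x y hxv hyv hxy),
      SimpleGraph.dist_eq_one_iff_adj.mpr (hcl y z hyv hzv hyz),
      SimpleGraph.dist_eq_one_iff_adj.mpr (hcl x z hxv hzv hxz)]
    omega

lemma erase_insert_erase {u v : V} (huv : u ≠ v) :
    insert v ((Finset.univ.erase v).erase u) = (Finset.univ : Finset V).erase u := by
  ext a
  simp only [Finset.mem_insert, Finset.mem_erase, Finset.mem_univ, and_true]
  constructor
  · rintro (rfl | ⟨h1, h2⟩)
    · exact Ne.symm huv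
    · exact h1
  · intro h
    by_cases hav : a = v
    · exact Or.inl hav
    · exact Or.inr ⟨h, hav⟩

end Aux

/-- A connected simple graph `G` on `n ≥ 3` vertices satisfies `mob(G) = n - 1`
iff `G` consists of a clique on `n - 1` vertices together with one further
vertex adjacent to exactly one vertex of the clique. -/
theorem stmt7 {V : Type*} [Fintype V] [DecidableEq V] (G : SimpleGraph V)
    (hG : G.Connected) (hn : 3 ≤ Fintype.card V) :
    mob G = Fintype.card V - 1 ↔
      ∃ v w : V, v ≠ w ∧ G.Adj v w ∧ (∀ x : V, G.Adj v x → x = w) ∧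
        ∀ x y : V, x ≠ v → y ≠ v → x ≠ y → G.Adj x y := by
  set M : Set ℕ := {n | ∃ S : Finset V, IsMobileGPSet G S ∧ S.card = n} with hM
  have hmobM : mob G = sSup M := rfl
  have hbdd : BddAbove M := by
    refine ⟨Fintype.card V, ?_⟩
    rintro k ⟨S, -, rfl⟩
    exact (Finset.card_le_univ S).trans_eq Finset.card_univ
  constructor
  · -- forward direction
    intro hmob
    rw [hmobM] at hmob
    have hne : M.Nonempty := by
      by_contra h
      rw [Set.not_nonempty_iff_eq_empty] at h
      rw [h, csSup_empty] at hmob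
      simp only [Nat.bot_eq_zero] at hmob
      omega
    have hmem := Nat.sSup_mem hne hbdd
    rw [hmob] at hmem
    obtain ⟨S, hSmob, hScard⟩ := hmem
    -- G is not complete
    have hnotcomp : ∃ a b : V, a ≠ b ∧ ¬ G.Adj a b := by
      by_contra h
      push_neg at h
      have hgpU : IsGPSet G Finset.univ := by
        intro x _ y _ z _ hxy hyz hxz
        rw [SimpleGraph.dist_eq_one_iff_adj.mpr (h x y hxy),
          SimpleGraph.dist_eq_one_iff_adj.mpr (h y z hyz),
          SimpleGraph.dist_eq_one_iff_adj.mpr (h x z hxz)]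
        omega
      have hmemU : Fintype.card V ∈ M :=
        ⟨Finset.univ, ⟨hgpU, 0, fun _ => Finset.univ, rfl,
          fun i hi => absurd hi (by omega), fun a => ⟨0, le_refl 0, Finset.mem_univ a⟩⟩,
          Finset.card_univ⟩
      have := le_csSup hbdd hmemU
      rw [hmob] at this
      omega
    -- identify the missing vertex
    have hSc : Sᶜ.card = 1 := by
      rw [Finset.card_compl, hScard]; omega
    obtain ⟨v, hv⟩ := Finset.card_eq_one.mp hSc
    have hiff : ∀ a, a ∉ S ↔ a = v := fun a => by
      rw [← Finset.mem_compl, hv, Finset.mem_singleton]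
    have hS : S = Finset.univ.erase v := by
      ext a
      simp only [Finset.mem_erase, Finset.mem_univ, and_true]
      constructor
      · intro ha h
        exact (hiff a).mpr h ha
      · intro h
        by_contra hns
        exact h ((hiff a).mp hns)
    rw [hS] at hSmob
    obtain ⟨hGP0, m, f, hf0, hmoves, hcov⟩ := hSmob
    obtain ⟨i, him, hvi⟩ := hcov v
    have hi0 : i ≠ 0 := by
      rintro rfl
      rw [hf0] at hvi
      simp [Finset.mem_erase] at hvi
    have hm : 0 < m := by omega
    have hmove := hmoves 0 hm
    rw [hf0] at hmove
    obtain ⟨u, huS, w', hw'S, hadj', hT, hTgp⟩ := hmove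
    have hw'v : w' = v := by
      by_contra h
      exact hw'S (by simp [Finset.mem_erase, h])
    rw [hw'v] at hadj' hT
    have huv : u ≠ v := (Finset.mem_erase.mp huS).1
    rw [erase_insert_erase huv] at hT
    rw [hT] at hTgp
    -- hTgp : IsGPSet G (univ.erase u), hadj' : G.Adj u v
    by_cases hcl : ∀ x y : V, x ≠ v → y ≠ v → x ≠ y → G.Adj x y
    · -- Case A: V \ {v} is a clique; show v is a leaf with neighbour u
      refine ⟨v, u, Ne.symm huv, hadj'.symm, ?_, hcl⟩
      intro z hz
      by_contra hzu
      obtain ⟨a, b, hab, hnab⟩ := hnotcomp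
      have htEx : ∃ t, t ≠ v ∧ ¬ G.Adj v t := by
        rcases eq_or_ne a v with rfl | hav
        · exact ⟨b, Ne.symm hab, hnab⟩
        · rcases eq_or_ne b v with rfl | hbv
          · exact ⟨a, hav, fun h => hnab h.symm⟩
          · exact absurd (hcl a b hav hbv hab) hnab
      obtain ⟨t, htv, hnvt⟩ := htEx
      have hzv : z ≠ v := hz.ne'
      have htu : t ≠ u := fun h => hnvt (h ▸ hadj'.symm)
      have htz : t ≠ z := fun h => hnvt (by rw [h]; exact hz)
      exact no_mid hG hTgp (Ne.symm huv) hzu htu hz.ne (Ne.symm htz) (Ne.symm htv)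
        hz (hcl z t hzv htv (Ne.symm htz)) hnvt
    · -- Case B: V \ {v} not a clique; show u is a leaf with neighbour v
      push_neg at hcl
      obtain ⟨x, y, hxv, hyv, hxy, hnxy⟩ := hcl
      obtain ⟨hxv', hvy'⟩ := gp_pair hG hGP0 hxv hyv hxy hnxy
      have hu_mem : u = x ∨ u = y := by
        by_contra h
        push_neg at h
        exact no_mid hG hTgp (fun hh => h.1 hh.symm) (Ne.symm huv) (fun hh => h.2 hh.symm)
          hxv (Ne.symm hyv) hxy hxv' hvy' hnxy
      obtain ⟨y0, hy0v, hy0u, hnuy0, hvy0⟩ :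
          ∃ y0, y0 ≠ v ∧ y0 ≠ u ∧ ¬ G.Adj u y0 ∧ G.Adj v y0 := by
        rcases hu_mem with rfl | rfl
        · exact ⟨y, hyv, Ne.symm hxy, hnxy, hvy'⟩
        · exact ⟨x, hxv, hxy, fun h => hnxy h.symm, hxv'.symm⟩
      have hclique : ∀ a b : V, a ≠ u → b ≠ u → a ≠ b → G.Adj a b := by
        intro a b hau hbu hab
        by_contra hnab
        have hkey : ∀ c, c ≠ u → c ≠ v → ¬ G.Adj v c → False := by
          intro c hcu hcv hnvc
          obtain ⟨hvu2, huc⟩ := gp_pair hG hTgp (Ne.symm huv) hcu (Ne.symm hcv) hnvc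
          rcases eq_or_ne c y0 with rfl | hcy0
          · exact hnuy0 huc
          · by_cases hb : G.Adj c y0
            · exact no_mid hG hTgp (Ne.symm huv) hy0u hcu (Ne.symm hy0v) (Ne.symm hcy0)
                (Ne.symm hcv) hvy0 hb.symm hnvc
            · obtain ⟨hcv2, _⟩ := gp_pair hG hGP0 hcv hy0v hcy0 hb
              exact hnvc hcv2.symm
        rcases eq_or_ne a v with rfl | hav
        · exact hkey b hbu (fun h => hab h.symm) hnab
        · rcases eq_or_ne b v with rfl | hbv
          · exact hkey a hau hav (fun h => hnab h.symm)
          · obtain ⟨hav2, hvb2⟩ := gp_pair hG hGP0 hav hbv hab hnab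
            exact no_mid hG hTgp hau (Ne.symm huv) hbu hav (Ne.symm hbv) hab hav2 hvb2 hnab
      refine ⟨u, v, huv, hadj', ?_, hclique⟩
      intro z hz
      by_contra hzv
      have hzu : z ≠ u := hz.ne'
      have hzy0 : z ≠ y0 := fun h => hnuy0 (h ▸ hz)
      exact no_mid hG hGP0 huv hzv hy0v hz.ne hzy0 (Ne.symm hy0u)
        hz (hclique z y0 hzu hy0u hzy0) hnuy0
  · -- backward direction
    rintro ⟨v, w, hvw_ne, hvw, hleaf, hcl⟩
    have hwv : w ≠ v := hvw.ne'
    have hmemM : (Fintype.card V - 1) ∈ M := by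
      refine ⟨Finset.univ.erase v,
        ⟨gp_of_clique hcl, 1,
          fun i => if i = 0 then Finset.univ.erase v else Finset.univ.erase w,
          by simp, ?_, ?_⟩, ?_⟩
      · intro i hi
        obtain rfl : i = 0 := by omega
        show LegalMove G (Finset.univ.erase v) (Finset.univ.erase w)
        refine ⟨w, by simp [Finset.mem_erase, hwv], v, by simp [Finset.mem_erase],
          hvw.symm, (erase_insert_erase hwv).symm, gp_T hG hvw hleaf hcl⟩
      · intro z
        by_cases hz : z = v
        · exact ⟨1, le_refl 1, by simp [hz, Finset.mem_erase, hvw_ne]⟩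
        · exact ⟨0, Nat.zero_le 1, by simp [Finset.mem_erase, hz]⟩
      · rw [Finset.card_erase_of_mem (Finset.mem_univ v), Finset.card_univ]
    have hub : ∀ k ∈ M, k ≤ Fintype.card V - 1 := by
      rintro k ⟨S, ⟨hgp, -⟩, rfl⟩
      have hle : S.card ≤ Fintype.card V := (Finset.card_le_univ S).trans_eq Finset.card_univ
      rcases Nat.lt_or_ge S.card (Fintype.card V) with h | h
      · omega
      · exfalso
        have hSu : S = Finset.univ := Finset.eq_univ_of_card S (by omega)
        have hx : ∃ x : V, x ≠ v ∧ x ≠ w := by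
          by_contra h'
          push_neg at h'
          have hsub : (Finset.univ : Finset V) ⊆ {v, w} := by
            intro a _
            rcases eq_or_ne a v with rfl | hav
            · simp
            · simp [h' a hav]
          have hc := Finset.card_le_card hsub
          have h2 : ({v, w} : Finset V).card ≤ 2 :=
            (Finset.card_insert_le _ _).trans (by simp)
          rw [Finset.card_univ] at hc
          omega
        obtain ⟨x, hxv, hxw⟩ := hx
        subst hSu
        have hnvx : ¬ G.Adj v x := fun h => hxw (hleaf x h)
        have hwx : G.Adj w x := hcl w x hwv hxv (fun h => hxw h.symm)
        apply hgp v (Finset.mem_univ v) w (Finset.mem_univ w) x (Finset.mem_univ x)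
          hvw_ne (fun h => hxw h.symm) (Ne.symm hxv)
        rw [SimpleGraph.dist_eq_one_iff_adj.mpr hvw,
          SimpleGraph.dist_eq_one_iff_adj.mpr hwx,
          dist_two_s7 hG (Ne.symm hxv) hnvx hvw hwx]
    rw [hmobM]
    exact le_antisymm (csSup_le ⟨_, hmemM⟩ hub) (le_csSup hbdd hmemM)
end

section
/- If T is a tree with at least 2 vertices, then mob(T) = 2. -/
section TreeLemmas

set_option linter.unusedSectionVars false

open SimpleGraph

variable {V : Type*} [DecidableEq V] {T : SimpleGraph V}

/-- In a connected graph there is a geodesic path between any two vertices. -/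
lemma ex_geo (hT : T.IsTree) (u v : V) :
    ∃ p : T.Walk u v, p.IsPath ∧ p.length = T.dist u v := by
  obtain ⟨q, hq⟩ := hT.isConnected.exists_walk_length_eq_dist u v
  refine ⟨q.bypass, q.bypass_isPath, le_antisymm ?_ (T.dist_le _)⟩
  rw [← hq]
  exact q.length_bypass_le

/-- In a tree, paths with the same endpoints are equal. -/
lemma walk_eq (hT : T.IsTree) {u v : V} (p q : T.Walk u v) (hp : p.IsPath) (hq : q.IsPath) :
    p = q :=
  Subtype.ext_iff.mp (hT.IsAcyclic.path_unique ⟨p, hp⟩ ⟨q, hq⟩)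

/-- In a tree, every path is a geodesic. -/
lemma path_len (hT : T.IsTree) {u v : V} (p : T.Walk u v) (hp : p.IsPath) :
    p.length = T.dist u v := by
  obtain ⟨q, hq, hl⟩ := ex_geo hT u v
  rw [walk_eq hT p q hp hq, hl]

/-- A vertex on a path in a tree is metrically between the endpoints. -/
lemma bet_of_mem (hT : T.IsTree) {x y w : V} (p : T.Walk x y) (hp : p.IsPath)
    (hw : w ∈ p.support) : T.dist x w + T.dist w y = T.dist x y := by
  have h1 := path_len hT _ (hp.takeUntil hw)
  have h2 := path_len hT _ (hp.dropUntil hw)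
  have h3 : (p.takeUntil w hw).length + (p.dropUntil w hw).length = p.length := by
    rw [← SimpleGraph.Walk.length_append, SimpleGraph.Walk.take_spec]
  have h4 := path_len hT p hp
  omega

/-- Conversely, metric betweenness implies membership in the path. -/
lemma mem_of_bet (hT : T.IsTree) :
    ∀ (n : ℕ) {x y w : V} (p : T.Walk x y), p.IsPath → T.dist x w = n →
      T.dist x w + T.dist w y = T.dist x y → w ∈ p.support := by
  intro n
  induction n with
  | zero =>
    intro x y w p hp h0 _
    have hxw : x = w := (hT.isConnected.dist_eq_zero_iff).mp h0
    subst hxw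
    exact p.start_mem_support
  | succ n ih =>
    intro x y w p hp hd hbet
    obtain ⟨R, hR, hRl⟩ := ex_geo hT x w
    cases R with
    | nil =>
      rw [SimpleGraph.dist_self] at hd
      omega
    | @cons _ x' _ h R' =>
      have hR' : R'.IsPath := hR.of_cons
      have hR'l := path_len hT R' hR'
      rw [SimpleGraph.Walk.length_cons] at hRl
      have hx'w : T.dist x' w = n := by omega
      have h1 : T.dist x x' = 1 := SimpleGraph.dist_eq_one_iff_adj.mpr h
      have htri1 : T.dist x' y ≤ T.dist x' w + T.dist w y := hT.isConnected.dist_triangle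
      have htri2 : T.dist x y ≤ T.dist x x' + T.dist x' y := hT.isConnected.dist_triangle
      have hbx' : T.dist x' w + T.dist w y = T.dist x' y := by omega
      obtain ⟨p', hp', _⟩ := ex_geo hT x' y
      have hw' : w ∈ p'.support := ih p' hp' hx'w hbx'
      have hxp' : x ∉ p'.support := by
        intro hx
        have hb := bet_of_mem hT p' hp' hx
        have hxx' : T.dist x' x = 1 := by rw [SimpleGraph.dist_comm]; exact h1
        omega
      have hcons : (SimpleGraph.Walk.cons h p').IsPath := hp'.cons hxp'
      rw [walk_eq hT p (SimpleGraph.Walk.cons h p') hp hcons, SimpleGraph.Walk.support_cons]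
      exact List.mem_cons_of_mem _ hw'

/-- Betweenness "transitivity" in a tree. -/
lemma bet_or (hT : T.IsTree) (x y z w : V) (h : T.dist x w + T.dist w z = T.dist x z) :
    T.dist x w + T.dist w y = T.dist x y ∨ T.dist y w + T.dist w z = T.dist y z := by
  obtain ⟨p, hp, _⟩ := ex_geo hT x y
  obtain ⟨q, hq, _⟩ := ex_geo hT y z
  have hw : w ∈ ((p.append q).bypass).support :=
    mem_of_bet hT (T.dist x w) _ (SimpleGraph.Walk.bypass_isPath _) rfl h
  have hmem := (p.append q).support_bypass_subset hw
  rw [SimpleGraph.Walk.mem_support_append_iff] at hmem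
  rcases hmem with h1 | h2
  · exact Or.inl (bet_of_mem hT p hp h1)
  · exact Or.inr (bet_of_mem hT q hq h2)

/-- Adjacent vertices of a tree have different distances to any vertex. -/
lemma adj_dist_ne (hT : T.IsTree) {a x : V} (ha : T.Adj a x) (c : V) :
    T.dist x c ≠ T.dist a c := by
  intro hcc
  obtain ⟨P, hP, hPl⟩ := ex_geo hT x c
  by_cases hmem : a ∈ P.support
  · have hb := bet_of_mem hT P hP hmem
    have h1 : T.dist x a = 1 := SimpleGraph.dist_eq_one_iff_adj.mpr ha.symm
    have hp1 : 0 < T.dist a c := by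
      refine hT.isConnected.pos_dist_of_ne ?_
      rintro rfl
      omega
    omega
  · have hcons : (SimpleGraph.Walk.cons ha P).IsPath := hP.cons hmem
    have hlen := path_len hT _ hcons
    rw [SimpleGraph.Walk.length_cons] at hlen
    omega

/-- Every triple of vertices in a tree has a median. -/
lemma exists_median (hT : T.IsTree) :
    ∀ (n : ℕ) (a b c : V), T.dist a b + T.dist a c ≤ n →
    ∃ w, T.dist a w + T.dist w b = T.dist a b ∧ T.dist a w + T.dist w c = T.dist a c ∧
      T.dist b w + T.dist w c = T.dist b c := by
  intro n
  induction n with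
  | zero =>
    intro a b c hn
    have hab : T.dist a b = 0 := by omega
    have hac : T.dist a c = 0 := by omega
    refine ⟨a, by simp [SimpleGraph.dist_self], by simp [SimpleGraph.dist_self], ?_⟩
    have h1 : a = b := hT.isConnected.dist_eq_zero_iff.mp hab
    have h2 : a = c := hT.isConnected.dist_eq_zero_iff.mp hac
    subst h1; subst h2
    simp [SimpleGraph.dist_self]
  | succ n ih =>
    intro a b c hn
    by_cases hbet : T.dist b a + T.dist a c = T.dist b c
    · exact ⟨a, by simp [SimpleGraph.dist_self], by simp [SimpleGraph.dist_self], hbet⟩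
    · have hab : a ≠ b := by
        rintro rfl
        rw [SimpleGraph.dist_self] at hbet
        omega
      have hac : a ≠ c := by
        rintro rfl
        rw [SimpleGraph.dist_self] at hbet
        rw [SimpleGraph.dist_comm] at hbet
        omega
      have hdab : 0 < T.dist a b := hT.isConnected.pos_dist_of_ne hab
      obtain ⟨P, hP, hPl⟩ := ex_geo hT a b
      cases P with
      | nil => exact absurd rfl hab
      | @cons _ x _ h P' =>
        have hP' : P'.IsPath := hP.of_cons
        have hP'l := path_len hT P' hP'
        rw [SimpleGraph.Walk.length_cons] at hPl
        have hax : T.dist a x = 1 := SimpleGraph.dist_eq_one_iff_adj.mpr h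
        have hxa : T.dist x a = 1 := by rw [SimpleGraph.dist_comm]; exact hax
        have htri : T.dist x c ≤ T.dist x a + T.dist a c := hT.isConnected.dist_triangle
        have htri2 : T.dist a c ≤ T.dist a x + T.dist x c := hT.isConnected.dist_triangle
        rcases lt_trichotomy (T.dist x c) (T.dist a c) with hlt | heq | hgt
        · obtain ⟨w, h1, h2, h3⟩ := ih x b c (by omega)
          have t1 : T.dist a w ≤ T.dist a x + T.dist x w := hT.isConnected.dist_triangle
          have t2 : T.dist a b ≤ T.dist a w + T.dist w b := hT.isConnected.dist_triangle
          have t3 : T.dist a c ≤ T.dist a w + T.dist w c := hT.isConnected.dist_triangle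
          exact ⟨w, by omega, by omega, h3⟩
        · exact absurd heq (adj_dist_ne hT h c)
        · have hbxc : T.dist x a + T.dist a c = T.dist x c := by omega
          rcases bet_or hT x b c a hbxc with h1 | h2
          · omega
          · exact absurd h2 hbet

/-- Any set of the form `{p, q}` is a general position set. -/
lemma gp_pair_s11 (p q : V) : IsGPSet T (insert p {q}) := by
  intro x hx y hy z hz hxy hyz hxz
  simp only [Finset.mem_insert, Finset.mem_singleton] at hx hy hz
  rcases hx with rfl | rfl <;> rcases hy with rfl | rfl <;> rcases hz with rfl | rfl <;>
    simp_all

end TreeLemmas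

/-- If `T` is a tree with at least 2 vertices, then `mob(T) = 2`. -/
theorem stmt11 {V : Type*} [Fintype V] [DecidableEq V] (T : SimpleGraph V)
    (hT : T.IsTree) (hn : 2 ≤ Fintype.card V) : mob T = 2 := by
  classical
  have hconn := hT.isConnected
  have hne : Nonempty V := hconn.nonempty
  set r : V := Classical.arbitrary V with hr
  obtain ⟨b, -, hbmax⟩ :=
    Finset.exists_max_image Finset.univ (T.dist r) ⟨r, Finset.mem_univ r⟩
  -- `b` is never an interior vertex of a path between two other vertices
  have avoid : ∀ {x y : V} (p : T.Walk x y), p.IsPath → x ≠ b → y ≠ b → b ∉ p.support := by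
    intro x y p hp hx hy hmem
    have hbet := bet_of_mem hT p hp hmem
    have e1 : T.dist x r = T.dist r x := SimpleGraph.dist_comm
    have e2 : T.dist b r = T.dist r b := SimpleGraph.dist_comm
    have e3 : T.dist x b = T.dist b x := SimpleGraph.dist_comm
    have m1 := hbmax x (Finset.mem_univ x)
    have m2 := hbmax y (Finset.mem_univ y)
    have p1 : 0 < T.dist x b := hconn.pos_dist_of_ne hx
    have p2 : 0 < T.dist b y := hconn.pos_dist_of_ne fun hh => hy hh.symm
    rcases bet_or hT x r y b hbet with h1 | h2
    · omega
    · omega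
  obtain ⟨x0, hx0⟩ := Fintype.exists_ne_of_one_lt_card (by omega) b
  -- tour of one robot through all vertices ≠ b
  have tour : ∀ (l : List V), (∀ v ∈ l, v ≠ b) → ∀ x : V, x ≠ b →
      ∃ (y : V) (W : T.Walk x y), y ≠ b ∧ b ∉ W.support ∧ ∀ v ∈ l, v ∈ W.support := by
    intro l
    induction l with
    | nil =>
      intro _ x hx
      refine ⟨x, SimpleGraph.Walk.nil, hx, ?_, by simp⟩
      simp only [SimpleGraph.Walk.support_nil, List.mem_singleton]
      exact fun hh => hx hh.symm
    | cons v l' ih =>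
      intro hl x hx
      have hv : v ≠ b := hl v List.mem_cons_self
      obtain ⟨p, hp, -⟩ := ex_geo hT x v
      obtain ⟨y, W', hy, hbW', hcov⟩ := ih (fun u hu => hl u (List.mem_cons_of_mem _ hu)) v hv
      refine ⟨y, p.append W', hy, ?_, ?_⟩
      · rw [SimpleGraph.Walk.mem_support_append_iff]
        push_neg
        exact ⟨avoid p hp hx hv, hbW'⟩
      · intro u hu
        rw [SimpleGraph.Walk.mem_support_append_iff]
        rcases List.mem_cons.mp hu with rfl | h'
        · exact Or.inl p.end_mem_support
        · exact Or.inr (hcov u h')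
  obtain ⟨y, W, hy, hbW, hcov⟩ := tour (Finset.univ.erase b).toList
    (fun v hv => (Finset.mem_erase.mp (Finset.mem_toList.mp hv)).1) x0 hx0
  set L := W.support with hLdef
  have hLhead : L = x0 :: W.support.tail := W.support_eq_cons
  have hchain : List.IsChain T.Adj L := SimpleGraph.Walk.isChain_adj_support W
  set m := L.length - 1 with hm
  set g : ℕ → V := fun i => L.getD i y with hg
  set f : ℕ → Finset V := fun i => insert (g i) {b} with hf
  have hLlen : 1 ≤ L.length := by rw [hLhead]; simp
  have hgmem : ∀ (i : ℕ), i < L.length → g i ∈ L := by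
    intro i hi
    rw [hg]
    simp only []
    rw [List.getD_eq_getElem L y hi]
    exact List.getElem_mem hi
  have hgb : ∀ (i : ℕ), i < L.length → g i ≠ b := fun i hi hh => hbW (hh ▸ hgmem i hi)
  have hadj : ∀ (i : ℕ), i < m → T.Adj (g i) (g (i + 1)) := by
    intro i hi
    have h1 : i < L.length - 1 := by omega
    have := List.isChain_iff_getElem.mp hchain i (by omega)
    have e1 : g i = L[i] := by rw [hg]; simp only []; rw [List.getD_eq_getElem L y (by omega)]
    have e2 : g (i + 1) = L[i + 1] := by
      rw [hg]; simp only []; rw [List.getD_eq_getElem L y (by omega)]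
    rw [e1, e2]
    exact this
  have hmob : IsMobileGPSet T (f 0) := by
    refine ⟨gp_pair_s11 _ _, m, f, rfl, ?_, ?_⟩
    · intro i hi
      refine ⟨g i, Finset.mem_insert_self _ _, g (i + 1), ?_, hadj i hi, ?_, gp_pair_s11 _ _⟩
      · simp only [hf, Finset.mem_insert, Finset.mem_singleton]
        push_neg
        exact ⟨(hadj i hi).ne', hgb (i + 1) (by omega)⟩
      · have herase : (insert (g i) ({b} : Finset V)).erase (g i) = {b} := by
          rw [Finset.erase_insert]
          simp only [Finset.mem_singleton]
          exact hgb i (by omega)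
        show f (i + 1) = insert (g (i + 1)) ((f i).erase (g i))
        rw [hf]
        simp only []
        rw [herase]
    · intro v
      by_cases hv : v = b
      · exact ⟨0, Nat.zero_le _, by simp [hf, hv]⟩
      · have hvL : v ∈ L := hcov v (by simp [Finset.mem_toList, Finset.mem_erase, hv])
        obtain ⟨k, hk, hkv⟩ := List.getElem_of_mem hvL
        refine ⟨k, by omega, ?_⟩
        have : g k = v := by
          rw [hg]; simp only []; rw [List.getD_eq_getElem L y hk]; exact hkv
        simp [hf, ← this]
  have h2mem : (2 : ℕ) ∈ {n | ∃ S : Finset V, IsMobileGPSet T S ∧ S.card = n} := by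
    refine ⟨f 0, hmob, ?_⟩
    have hg0 : g 0 ≠ b := hgb 0 (by omega)
    rw [hf]
    simp only []
    rw [Finset.card_insert_of_notMem (by simpa using hg0)]
    simp
  have hub : ∀ n ∈ {n | ∃ S : Finset V, IsMobileGPSet T S ∧ S.card = n}, n ≤ 2 := by
    rintro n ⟨S, ⟨hSgp, m', f', hf0, hmoves, hcover⟩, rfl⟩
    by_contra hgt
    push_neg at hgt
    -- extract three distinct vertices of S
    obtain ⟨aa, haa⟩ := Finset.card_pos.mp (show 0 < S.card by omega)
    obtain ⟨bb, hbb, hba⟩ := Finset.exists_mem_ne (show 1 < S.card by omega) aa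
    have hcc' : 0 < ((S.erase aa).erase bb).card := by
      rw [Finset.card_erase_of_mem (Finset.mem_erase.mpr ⟨hba, hbb⟩),
        Finset.card_erase_of_mem haa]
      omega
    obtain ⟨cc, hcc0⟩ := Finset.card_pos.mp hcc'
    have hcb : cc ≠ bb := (Finset.mem_erase.mp hcc0).1
    have hca : cc ≠ aa := (Finset.mem_erase.mp (Finset.mem_of_mem_erase hcc0)).1
    have hcc : cc ∈ S := Finset.mem_of_mem_erase (Finset.mem_of_mem_erase hcc0)
    obtain ⟨ww, hw1, hw2, hw3⟩ :=
      exists_median hT (T.dist aa bb + T.dist aa cc) aa bb cc le_rfl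
    -- ww is distinct from aa, bb, cc and not in S
    have hwa : ww ≠ aa := by
      intro h
      rw [h] at hw3
      exact hSgp bb hbb aa haa cc hcc hba (Ne.symm hca) (Ne.symm hcb) hw3
    have hwb : ww ≠ bb := by
      intro h
      rw [h] at hw2
      exact hSgp aa haa bb hbb cc hcc (Ne.symm hba) (Ne.symm hcb) (Ne.symm hca) hw2
    have hwc : ww ≠ cc := by
      intro h
      rw [h] at hw1
      exact hSgp aa haa cc hcc bb hbb (Ne.symm hca) hcb (Ne.symm hba) hw1
    have hwS : ww ∉ S := by
      intro hwS
      exact hSgp aa haa ww hwS bb hbb (Ne.symm hwa) hwb (Ne.symm hba) hw1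
    -- invariant
    set Inv : Finset V → Prop := fun F => ww ∉ F ∧ ∃ x ∈ F, ∃ y ∈ F, ∃ z ∈ F,
      (T.dist x ww + T.dist ww y = T.dist x y) ∧
      (T.dist x ww + T.dist ww z = T.dist x z) ∧
      (T.dist y ww + T.dist ww z = T.dist y z) with hInvDef
    have step : ∀ F F' : Finset V, Inv F → LegalMove T F F' → Inv F' := by
      rintro F F' ⟨hwF, x, hx, y, hy, z, hz, b1, b2, b3⟩ ⟨u, hu, v, hv, huv, rfl, hgp'⟩
      have hNe : ∀ {p q : V}, p ∈ F → (T.dist p ww + T.dist ww q = T.dist p q) → p ≠ q := by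
        intro p q hp hb hpq
        subst hpq
        rw [SimpleGraph.dist_self] at hb
        have e : T.dist ww p = T.dist p ww := SimpleGraph.dist_comm
        have hz0 : T.dist p ww = 0 := by omega
        exact hwF ((hconn.dist_eq_zero_iff.mp hz0) ▸ hp)
      have hxy : x ≠ y := hNe hx b1
      have hxz : x ≠ z := hNe hx b2
      have hyz : y ≠ z := hNe hy b3
      have huw : u ≠ ww := fun hh => hwF (hh ▸ hu)
      have hmem : ∀ {p : V}, p ∈ F → p ≠ u → p ∈ insert v (F.erase u) :=
        fun hp hne => Finset.mem_insert_of_mem (Finset.mem_erase.mpr ⟨hne, hp⟩)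
      have hxw : x ≠ ww := fun hh => hwF (hh ▸ hx)
      have hyw : y ≠ ww := fun hh => hwF (hh ▸ hy)
      have hzw : z ≠ ww := fun hh => hwF (hh ▸ hz)
      have hvw : v ≠ ww := by
        rintro rfl
        by_cases hux : u = x
        · exact hgp' y (hmem hy (hux ▸ hxy.symm : y ≠ u)) v (Finset.mem_insert_self _ _)
            z (hmem hz (hux ▸ hxz.symm : z ≠ u)) hyw (Ne.symm hzw) hyz b3
        · by_cases huy : u = y
          · exact hgp' x (hmem hx fun hh => hux hh.symm) v (Finset.mem_insert_self _ _)
              z (hmem hz (huy ▸ hyz.symm : z ≠ u)) hxw (Ne.symm hzw) hxz b2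
          · exact hgp' x (hmem hx fun hh => hux hh.symm) v (Finset.mem_insert_self _ _)
              y (hmem hy fun hh => huy hh.symm) hxw (Ne.symm hyw) hxy b1
      have hwF' : ww ∉ insert v (F.erase u) := by
        intro hh
        rcases Finset.mem_insert.mp hh with hh | hh
        · exact hvw hh.symm
        · exact hwF (Finset.mem_of_mem_erase hh)
      have hdu : T.dist u v = 1 := SimpleGraph.dist_eq_one_iff_adj.mpr huv
      have hduw : 0 < T.dist u ww := hconn.pos_dist_of_ne huw
      have hdwv : 0 < T.dist ww v := hconn.pos_dist_of_ne fun hh => hvw hh.symm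
      have hnb : ¬(T.dist u ww + T.dist ww v = T.dist u v) := by omega
      have repl : ∀ {p : V}, (T.dist p ww + T.dist ww u = T.dist p u) →
          (T.dist p ww + T.dist ww v = T.dist p v) := by
        intro p hb
        rcases bet_or hT p v u ww hb with hh | hh
        · exact hh
        · exfalso
          apply hnb
          have e1 : T.dist v ww = T.dist ww v := SimpleGraph.dist_comm
          have e2 : T.dist ww u = T.dist u ww := SimpleGraph.dist_comm
          have e3 : T.dist v u = T.dist u v := SimpleGraph.dist_comm
          omega
      have repl' : ∀ {q : V}, (T.dist u ww + T.dist ww q = T.dist u q) →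
          (T.dist v ww + T.dist ww q = T.dist v q) := by
        intro q hb
        rcases bet_or hT u v q ww hb with hh | hh
        · exact absurd hh hnb
        · exact hh
      refine ⟨hwF', ?_⟩
      have hvF' : v ∈ insert v (F.erase u) := Finset.mem_insert_self _ _
      by_cases hux : u = x
      · subst hux
        exact ⟨v, hvF', y, hmem hy hxy.symm, z, hmem hz hxz.symm,
          repl' b1, repl' b2, b3⟩
      · by_cases huy : u = y
        · subst huy
          refine ⟨x, hmem hx fun hh => hux hh.symm, v, hvF', z, hmem hz hyz.symm, ?_, b2, ?_⟩
          · exact repl (by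
              have e1 : T.dist ww u = T.dist u ww := SimpleGraph.dist_comm
              omega)
          · exact repl' b3
        · by_cases huz : u = z
          · subst huz
            refine ⟨x, hmem hx fun hh => hux hh.symm, y, hmem hy fun hh => huy hh.symm,
              v, hvF', b1, ?_, ?_⟩
            · exact repl (by
                have e1 : T.dist ww u = T.dist u ww := SimpleGraph.dist_comm
                omega)
            · exact repl (by
                have e1 : T.dist ww u = T.dist u ww := SimpleGraph.dist_comm
                omega)
          · exact ⟨x, hmem hx fun hh => hux hh.symm, y, hmem hy fun hh => huy hh.symm,
              z, hmem hz fun hh => huz hh.symm, b1, b2, b3⟩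
    have hInv : ∀ i : ℕ, i ≤ m' → Inv (f' i) := by
      intro i
      induction i with
      | zero =>
        intro _
        rw [hf0]
        exact ⟨hwS, aa, haa, bb, hbb, cc, hcc, hw1, hw2, hw3⟩
      | succ i ih =>
        intro hi
        exact step _ _ (ih (by omega)) (hmoves i (by omega))
    obtain ⟨i, him, hwi⟩ := hcover ww
    exact (hInv i him).1 hwi
  have hbdd : BddAbove {n | ∃ S : Finset V, IsMobileGPSet T S ∧ S.card = n} :=
    ⟨2, fun n hn => hub n hn⟩
  rw [mob]
  exact le_antisymm (csSup_le ⟨2, h2mem⟩ hub) (le_csSup hbdd h2mem)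
end
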